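/- arXiv:2012.03336 — 6 statements merged into one kernel-verified Lean document; each statement's English description precedes it below -/
import Mathlib

section
/- Let L > 0. The rational basis functions φ_n are orthogonal in L²(ℝ, ℂ): for all integers p ≠ n, ∫_ℝ φ_p(x) · conj(φ_n(x)) dx = 0, and for every integer n, ∫_ℝ |φ_n(x)|² dx = π / L. -/
open MeasureTheory Complex Filter Topology

lemma zplus_ne {L : ℝ} (hL : 0 < L) (x : ℝ) : (L : ℂ) + Complex.I * x ≠ 0 := by
  intro h
  have := congrArg Complex.re h
  simp at this
  exact hL.ne' this

lemma zminus_ne {L : ℝ} (hL : 0 < L) (x : ℝ) : (L : ℂ) - Complex.I * x ≠ 0 := by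
  intro h
  have := congrArg Complex.re h
  simp at this
  exact hL.ne' this

lemma conj_zplus (L x : ℝ) :
    (starRingEnd ℂ) ((L : ℂ) + Complex.I * x) = (L : ℂ) - Complex.I * x := by
  simp [sub_eq_add_neg]

lemma norm_z_sq (L x : ℝ) : ‖(L : ℂ) + Complex.I * x‖ ^ 2 = L ^ 2 + x ^ 2 := by
  rw [Complex.sq_norm, Complex.normSq_apply]
  simp [pow_two]

lemma norm_z_sq' (L x : ℝ) : ‖(L : ℂ) - Complex.I * x‖ ^ 2 = L ^ 2 + x ^ 2 := by
  rw [← conj_zplus, RingHomIsometric.norm_map, norm_z_sq]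

lemma norm_ratBasis_sq {L : ℝ} (hL : 0 < L) (n : ℤ) (x : ℝ) :
    ‖((L : ℂ) + Complex.I * x) ^ n / ((L : ℂ) - Complex.I * x) ^ (n + 1)‖ ^ 2
      = (L ^ 2 + x ^ 2)⁻¹ := by
  have h1 : ‖(L : ℂ) + Complex.I * x‖ = ‖(L : ℂ) - Complex.I * x‖ := by
    rw [← conj_zplus, RingHomIsometric.norm_map]
  have hr : ‖(L : ℂ) - Complex.I * x‖ ≠ 0 := norm_ne_zero_iff.mpr (zminus_ne hL x)
  rw [norm_div, norm_zpow, norm_zpow, h1, ← zpow_sub₀ hr]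
  have : n - (n + 1) = -1 := by ring
  rw [this, zpow_neg_one, inv_pow, norm_z_sq']

lemma invsq_eq {L : ℝ} (hL : 0 < L) (x : ℝ) :
    (L ^ 2 + x ^ 2)⁻¹ = (L ^ 2)⁻¹ * (1 + (x / L) ^ 2)⁻¹ := by
  rw [← mul_inv]
  congr 1
  field_simp

lemma integrable_invsq {L : ℝ} (hL : 0 < L) :
    Integrable (fun x : ℝ => (L ^ 2 + x ^ 2)⁻¹) := by
  have h := (integrable_inv_one_add_sq.comp_div (by positivity : L ≠ 0)).const_mul (L ^ 2)⁻¹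
  exact h.congr (by filter_upwards with x using (invsq_eq hL x).symm)

lemma integral_invsq {L : ℝ} (hL : 0 < L) :
    ∫ x : ℝ, (L ^ 2 + x ^ 2)⁻¹ = Real.pi / L := by
  simp_rw [invsq_eq hL]
  rw [MeasureTheory.integral_const_mul,
    MeasureTheory.Measure.integral_comp_div (fun u : ℝ => (1 + u ^ 2)⁻¹) L,
    integral_univ_inv_one_add_sq, abs_of_pos hL, smul_eq_mul]
  field_simp

lemma prod_eq {L : ℝ} (hL : 0 < L) (p n : ℤ) (x : ℝ) :
    (((L : ℂ) + Complex.I * x) ^ p / ((L : ℂ) - Complex.I * x) ^ (p + 1)) *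
      (starRingEnd ℂ) (((L : ℂ) + Complex.I * x) ^ n / ((L : ℂ) - Complex.I * x) ^ (n + 1))
    = ((L : ℂ) + Complex.I * x) ^ (p - n - 1) / ((L : ℂ) - Complex.I * x) ^ (p - n + 1) := by
  have ha := zplus_ne hL x
  have hb := zminus_ne hL x
  have hc : (starRingEnd ℂ) ((L : ℂ) - Complex.I * x) = (L : ℂ) + Complex.I * x := by
    rw [← conj_zplus, Complex.conj_conj]
  set A := (L : ℂ) + Complex.I * x
  set B := (L : ℂ) - Complex.I * x
  have key : ∀ (a : ℂ) (i j : ℤ), a ≠ 0 → a ^ i * (a ^ j)⁻¹ = a ^ (i - j) := fun a i j h => by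
    rw [zpow_sub₀ h, div_eq_mul_inv]
  rw [map_div₀, map_zpow₀, map_zpow₀, conj_zplus, hc]
  have step : A ^ p / B ^ (p + 1) * (B ^ n / A ^ (n + 1))
      = (A ^ p * (A ^ (n + 1))⁻¹) * (B ^ n * (B ^ (p + 1))⁻¹) := by ring
  rw [step, key A _ _ ha, key B _ _ hb, show p - (n + 1) = p - n - 1 by ring,
    show n - (p + 1) = -(p - n + 1) by ring, zpow_neg, ← div_eq_mul_inv]

lemma ratDeriv {L : ℝ} (hL : 0 < L) (m : ℤ) (x : ℝ) :
    HasDerivAt (fun y : ℝ => (((L : ℂ) + Complex.I * y) / ((L : ℂ) - Complex.I * y)) ^ m)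
      ((2 * L * m * Complex.I) *
        (((L : ℂ) + Complex.I * x) ^ (m - 1) / ((L : ℂ) - Complex.I * x) ^ (m + 1))) x := by
  have ha := zplus_ne hL x
  have hb := zminus_ne hL x
  have hre : HasDerivAt (fun y : ℝ => (y : ℂ)) 1 x := by
    exact Complex.ofRealCLM.hasDerivAt (x := x)
  have hnum : HasDerivAt (fun y : ℝ => (L : ℂ) + Complex.I * y) Complex.I x := by
    simpa using ((hre.const_mul Complex.I).const_add (L : ℂ))
  have hden : HasDerivAt (fun y : ℝ => (L : ℂ) - Complex.I * y) (-Complex.I) x := by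
    simpa using ((hre.const_mul Complex.I).const_sub (L : ℂ))
  have hq := hnum.div hden hb
  have hq' : HasDerivAt (fun y : ℝ => ((L : ℂ) + Complex.I * y) / ((L : ℂ) - Complex.I * y))
      (2 * L * Complex.I / ((L : ℂ) - Complex.I * x) ^ 2) x := by
    refine hq.congr_deriv ?_
    field_simp
    ring
  have hz := hasDerivAt_zpow m (((L : ℂ) + Complex.I * x) / ((L : ℂ) - Complex.I * x))
    (Or.inl (div_ne_zero ha hb))
  have := hz.comp x hq'
  refine this.congr_deriv ?_
  rw [div_zpow]
  have h1 : ((L : ℂ) + Complex.I * x) ^ (m - 1) ≠ 0 := zpow_ne_zero _ ha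
  have h2 : ((L : ℂ) - Complex.I * x) ^ (m - 1) ≠ 0 := zpow_ne_zero _ hb
  have h3 : ((L : ℂ) - Complex.I * x) ^ (m + 1) ≠ 0 := zpow_ne_zero _ hb
  have hsplit : ((L : ℂ) - Complex.I * x) ^ (m + 1)
      = ((L : ℂ) - Complex.I * x) ^ (m - 1) * ((L : ℂ) - Complex.I * x) ^ 2 := by
    rw [← zpow_natCast _ 2, ← zpow_add₀ hb]
    congr 1
    push_cast
    ring
  rw [hsplit]
  field_simp

lemma tendsto_q {L : ℝ} (hL : 0 < L) {l : Filter ℝ} (habs : Filter.Tendsto (fun y : ℝ => |y|) l Filter.atTop)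
    (hne : ∀ᶠ y in l, y ≠ 0) :
    Filter.Tendsto (fun y : ℝ => ((L : ℂ) + Complex.I * y) / ((L : ℂ) - Complex.I * y)) l
      (𝓝 (-1)) := by
  have h0 : Filter.Tendsto (fun y : ℝ => (L : ℂ) / y) l (𝓝 0) := by
    rw [tendsto_zero_iff_norm_tendsto_zero]
    have : (fun y : ℝ => ‖(L : ℂ) / (y : ℂ)‖) = fun y : ℝ => |L| / |y| := by
      funext y
      rw [norm_div, Complex.norm_real, Complex.norm_real, Real.norm_eq_abs, Real.norm_eq_abs]
    rw [this]
    exact Filter.Tendsto.div_atTop tendsto_const_nhds habs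
  have hnum : Filter.Tendsto (fun y : ℝ => (L : ℂ) / y + Complex.I) l (𝓝 Complex.I) := by
    simpa using h0.add tendsto_const_nhds
  have hden : Filter.Tendsto (fun y : ℝ => (L : ℂ) / y - Complex.I) l (𝓝 (-Complex.I)) := by
    simpa using h0.sub tendsto_const_nhds
  have hdiv := hnum.div hden (by simp [Complex.I_ne_zero])
  have hIdiv : Complex.I / (-Complex.I) = -1 := by
    rw [div_neg, Complex.div_I]
    simp [Complex.I_sq]
  rw [hIdiv] at hdiv
  refine hdiv.congr' ?_
  filter_upwards [hne] with y hy
  have hy' : (y : ℂ) ≠ 0 := Complex.ofReal_ne_zero.mpr hy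
  show ((L : ℂ) / y + Complex.I) / ((L : ℂ) / y - Complex.I)
      = ((L : ℂ) + Complex.I * y) / ((L : ℂ) - Complex.I * y)
  have e1 : (L : ℂ) / y + Complex.I = ((L : ℂ) + Complex.I * y) * (y : ℂ)⁻¹ := by
    field_simp
  have e2 : (L : ℂ) / y - Complex.I = ((L : ℂ) - Complex.I * y) * (y : ℂ)⁻¹ := by
    field_simp
  rw [e1, e2, mul_div_mul_right _ _ (inv_ne_zero hy')]

lemma norm_F {L : ℝ} (hL : 0 < L) (m : ℤ) (x : ℝ) :
    ‖((L : ℂ) + Complex.I * x) ^ (m - 1) / ((L : ℂ) - Complex.I * x) ^ (m + 1)‖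
      = (L ^ 2 + x ^ 2)⁻¹ := by
  have h1 : ‖(L : ℂ) + Complex.I * x‖ = ‖(L : ℂ) - Complex.I * x‖ := by
    rw [← conj_zplus, RingHomIsometric.norm_map]
  have hr : ‖(L : ℂ) - Complex.I * x‖ ≠ 0 := norm_ne_zero_iff.mpr (zminus_ne hL x)
  rw [norm_div, norm_zpow, norm_zpow, h1, ← zpow_sub₀ hr,
    show m - 1 - (m + 1) = -((2 : ℕ) : ℤ) by omega, zpow_neg, zpow_natCast, norm_z_sq']

lemma integrable_F {L : ℝ} (hL : 0 < L) (m : ℤ) :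
    Integrable (fun x : ℝ =>
      ((L : ℂ) + Complex.I * x) ^ (m - 1) / ((L : ℂ) - Complex.I * x) ^ (m + 1)) := by
  have cA : Continuous fun x : ℝ => (L : ℂ) + Complex.I * x := by continuity
  have cB : Continuous fun x : ℝ => (L : ℂ) - Complex.I * x := by continuity
  have hcont : Continuous (fun x : ℝ =>
      ((L : ℂ) + Complex.I * x) ^ (m - 1) / ((L : ℂ) - Complex.I * x) ^ (m + 1)) :=
    (cA.zpow₀ (m - 1) fun x => Or.inl (zplus_ne hL x)).div
      (cB.zpow₀ (m + 1) fun x => Or.inl (zminus_ne hL x))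
      fun x => zpow_ne_zero _ (zminus_ne hL x)
  refine (integrable_invsq hL).mono' hcont.aestronglyMeasurable ?_
  filter_upwards with x
  rw [norm_F hL m x]

lemma tendsto_qm {L : ℝ} (hL : 0 < L) (m : ℤ) {l : Filter ℝ}
    (habs : Filter.Tendsto (fun y : ℝ => |y|) l Filter.atTop) (hne : ∀ᶠ y in l, y ≠ 0) :
    Filter.Tendsto (fun y : ℝ => (((L : ℂ) + Complex.I * y) / ((L : ℂ) - Complex.I * y)) ^ m) l
      (𝓝 ((-1 : ℂ) ^ m)) :=
  ((continuousAt_zpow₀ (-1 : ℂ) m (Or.inl (by norm_num))).tendsto).comp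
    (tendsto_q hL habs hne)

/-- Rational basis function `φ_n(x) = (L + ix)^n / (L - ix)^(n+1)`. -/
noncomputable def ratBasis (L : ℝ) (n : ℤ) (x : ℝ) : ℂ :=
  ((L : ℂ) + Complex.I * x) ^ n / ((L : ℂ) - Complex.I * x) ^ (n + 1)

theorem ratBasis_orthogonality (L : ℝ) (hL : 0 < L) :
    (∀ p n : ℤ, p ≠ n →
      ∫ x : ℝ, ratBasis L p x * (starRingEnd ℂ) (ratBasis L n x) = 0) ∧
    (∀ n : ℤ, ∫ x : ℝ, ‖ratBasis L n x‖ ^ 2 = Real.pi / L) := by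
  constructor
  · intro p n hpn
    set m := p - n with hmdef
    have hm : m ≠ 0 := sub_ne_zero.mpr hpn
    have hc : (2 * (L : ℂ) * m * Complex.I) ≠ 0 := by
      simp only [ne_eq, mul_eq_zero, Complex.I_ne_zero, or_false, Complex.ofReal_eq_zero,
        Int.cast_eq_zero]
      push_neg
      exact ⟨⟨two_ne_zero, hL.ne'⟩, hm⟩
    have hInt := integrable_F hL m
    have key := integral_of_hasDerivAt_of_tendsto (E := ℂ)
      (f := fun y : ℝ => (((L : ℂ) + Complex.I * y) / ((L : ℂ) - Complex.I * y)) ^ m)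
      (f' := fun x : ℝ => (2 * L * m * Complex.I) *
        (((L : ℂ) + Complex.I * x) ^ (m - 1) / ((L : ℂ) - Complex.I * x) ^ (m + 1)))
      (fun x => ratDeriv hL m x) (hInt.const_mul _)
      (tendsto_qm hL m tendsto_abs_atBot_atTop (eventually_ne_atBot 0))
      (tendsto_qm hL m tendsto_abs_atTop_atTop (eventually_ne_atTop 0))
    rw [sub_self, integral_const_mul] at key
    have hF0 : ∫ x : ℝ,
        ((L : ℂ) + Complex.I * x) ^ (m - 1) / ((L : ℂ) - Complex.I * x) ^ (m + 1) = 0 :=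
      (mul_eq_zero.mp key).resolve_left hc
    have : ∀ x : ℝ, ratBasis L p x * (starRingEnd ℂ) (ratBasis L n x)
        = ((L : ℂ) + Complex.I * x) ^ (m - 1) / ((L : ℂ) - Complex.I * x) ^ (m + 1) := by
      intro x
      rw [ratBasis, ratBasis, prod_eq hL p n x, hmdef]
    simp_rw [this]
    exact hF0
  · intro n
    have : ∀ x : ℝ, ‖ratBasis L n x‖ ^ 2 = (L ^ 2 + x ^ 2)⁻¹ := fun x =>
      norm_ratBasis_sq hL n x
    simp_rw [this]
    exact integral_invsq hL
end

section
/- Let L > 0. The family of rational basis functions {φ_n : n ∈ ℤ} is complete in L²(ℝ, ℂ): the closure of the linear span of {φ_n : n ∈ ℤ} (viewed as elements of L²(ℝ, ℂ)) is all of L²(ℝ, ℂ). -/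
open MeasureTheory Complex Filter Topology

namespace RatBasisAux

/-- The Cayley-type function `x ↦ (L+ix)/(L-ix)`. -/
noncomputable def cayFn (L : ℝ) (x : ℝ) : ℂ :=
  ((L : ℂ) + Complex.I * x) / ((L : ℂ) - Complex.I * x)

variable {L : ℝ}

lemma den_ne (hL : 0 < L) (x : ℝ) : ((L : ℂ) - Complex.I * x) ≠ 0 := by
  intro h
  have := congrArg Complex.re h
  simp [Complex.sub_re, Complex.mul_re] at this
  exact hL.ne' this

lemma num_ne (hL : 0 < L) (x : ℝ) : ((L : ℂ) + Complex.I * x) ≠ 0 := by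
  intro h
  have := congrArg Complex.re h
  simp [Complex.add_re, Complex.mul_re] at this
  exact hL.ne' this

lemma cay_ne (hL : 0 < L) (x : ℝ) : cayFn L x ≠ 0 :=
  div_ne_zero (num_ne hL x) (den_ne hL x)

lemma norm_den (x : ℝ) : ‖((L : ℂ) - Complex.I * x)‖ = Real.sqrt (L ^ 2 + x ^ 2) := by
  rw [Complex.norm_def]
  congr 1
  simp [Complex.normSq_apply]
  ring

lemma ratBasis_eq (hL : 0 < L) (n : ℤ) (x : ℝ) :
    ratBasis L n x = cayFn L x ^ n / ((L : ℂ) - Complex.I * x) := by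
  unfold ratBasis cayFn
  rw [div_zpow, div_div, ← zpow_add_one₀ (den_ne hL x)]

/-- span of the functions `x ↦ cayFn L x ^ n`, `n : ℤ`, inside `ℝ → ℂ`. -/
noncomputable def cayP (L : ℝ) : Submodule ℂ (ℝ → ℂ) :=
  Submodule.span ℂ (Set.range fun n : ℤ => fun x : ℝ => cayFn L x ^ n)

lemma one_mem_cayP (hL : 0 < L) : (1 : ℝ → ℂ) ∈ cayP L :=
  Submodule.subset_span ⟨0, funext fun x => by simp⟩

lemma mul_mem_cayP (hL : 0 < L) {f g : ℝ → ℂ} (hf : f ∈ cayP L) (hg : g ∈ cayP L) :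
    f * g ∈ cayP L := by
  have h1 : f * g ∈ cayP L * cayP L := Submodule.mul_mem_mul hf hg
  have h2 : cayP L * cayP L ≤ cayP L := by
    rw [cayP, Submodule.span_mul_span]
    apply Submodule.span_le.2
    rintro _ ⟨a, ⟨m, rfl⟩, b, ⟨n, rfl⟩, rfl⟩
    refine Submodule.subset_span ⟨m + n, funext fun x => ?_⟩
    simp [zpow_add₀ (cay_ne hL x), Pi.mul_apply]
  exact h2 h1

lemma conj_cay (hL : 0 < L) (x : ℝ) :
    (starRingEnd ℂ) (cayFn L x) = (cayFn L x)⁻¹ := by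
  unfold cayFn
  rw [map_div₀, inv_div]
  simp only [map_add, map_sub, map_mul, Complex.conj_ofReal, Complex.conj_I]
  ring_nf

lemma star_mem_cayP (hL : 0 < L) {f : ℝ → ℂ} (hf : f ∈ cayP L) : star f ∈ cayP L := by
  induction hf using Submodule.span_induction with
  | mem f hf =>
      obtain ⟨n, rfl⟩ := hf
      refine Submodule.subset_span ⟨-n, funext fun x => ?_⟩
      have : (starRingEnd ℂ) (cayFn L x ^ n) = cayFn L x ^ (-n) := by
        rw [map_zpow₀, conj_cay hL, inv_zpow, ← zpow_neg]
      simpa [Pi.star_apply, Complex.star_def] using this.symm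
  | zero => simpa using Submodule.zero_mem (cayP L)
  | add f g _ _ hf hg => rw [star_add]; exact Submodule.add_mem _ hf hg
  | smul c f _ hf => rw [star_smul]; exact Submodule.smul_mem _ _ hf

/-- `cayP` as a star subalgebra of `ℝ → ℂ`. -/
noncomputable def caySA (hL : 0 < L) : StarSubalgebra ℂ (ℝ → ℂ) where
  toSubalgebra := (cayP L).toSubalgebra (one_mem_cayP hL)
    (fun _ _ hf hg => mul_mem_cayP hL hf hg)
  star_mem' := fun hf => star_mem_cayP hL hf

lemma mem_caySA_iff (hL : 0 < L) {f : ℝ → ℂ} : f ∈ caySA hL ↔ f ∈ cayP L := Iff.rfl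

lemma cay_continuous (hL : 0 < L) : Continuous (cayFn L) := by
  apply Continuous.div (by continuity) (by continuity) (den_ne hL)

lemma norm_den_tendsto (hL : 0 < L) :
    Tendsto (fun x : ℝ => ‖((L : ℂ) - Complex.I * x)‖) (cocompact ℝ) atTop := by
  apply tendsto_atTop_mono (fun x => ?_)
  · show Tendsto (fun x : ℝ => |x|) (cocompact ℝ) atTop
    rw [cocompact_eq_atBot_atTop, tendsto_sup]
    exact ⟨tendsto_abs_atBot_atTop, tendsto_abs_atTop_atTop⟩
  · skip
    have h := Complex.abs_im_le_norm ((L : ℂ) - Complex.I * x)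
    simpa using h

lemma cay_tendsto (hL : 0 < L) : Tendsto (cayFn L) (cocompact ℝ) (𝓝 (-1)) := by
  have heq : cayFn L = fun x : ℝ => -1 + 2 * L / ((L : ℂ) - Complex.I * x) := by
    funext x
    unfold cayFn
    rw [eq_comm, add_div' _ _ _ (den_ne hL x), div_eq_div_iff (den_ne hL x) (den_ne hL x)]
    ring
  rw [heq]
  have h0 : Tendsto (fun x : ℝ => 2 * (L : ℂ) / ((L : ℂ) - Complex.I * x))
      (cocompact ℝ) (𝓝 0) := by
    rw [tendsto_zero_iff_norm_tendsto_zero]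
    simp only [norm_div]
    exact Tendsto.div_atTop tendsto_const_nhds (norm_den_tendsto hL)
  have := (tendsto_const_nhds (x := (-1 : ℂ)) (f := cocompact ℝ)).add h0
  rw [add_zero] at this
  exact this

/-- The Cayley function as a continuous map on the one-point compactification of `ℝ`. -/
noncomputable def psiOne (hL : 0 < L) : C(OnePoint ℝ, ℂ) :=
  OnePoint.continuousMapMk ⟨cayFn L, cay_continuous hL⟩ (-1)
    (by rw [Filter.coclosedCompact_eq_cocompact]; exact cay_tendsto hL)

lemma psiOne_coe (hL : 0 < L) (x : ℝ) : psiOne hL (x : OnePoint ℝ) = cayFn L x := rfl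

lemma psiOne_infty (hL : 0 < L) : psiOne hL OnePoint.infty = -1 := rfl

lemma cay_injective (hL : 0 < L) : Function.Injective (cayFn L) := by
  intro x y h
  unfold cayFn at h
  rw [div_eq_div_iff (den_ne hL x) (den_ne hL y)] at h
  have h2 : (2 * (L : ℂ) * Complex.I) * x = (2 * (L : ℂ) * Complex.I) * y := by
    linear_combination h
  have hne : (2 * (L : ℂ) * Complex.I) ≠ 0 := by
    simp [Complex.I_ne_zero, Complex.ofReal_ne_zero.2 hL.ne']
  have := mul_left_cancel₀ hne h2
  exact_mod_cast this

lemma cay_ne_neg_one (hL : 0 < L) (x : ℝ) : cayFn L x ≠ -1 := by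
  intro h
  unfold cayFn at h
  rw [div_eq_iff (den_ne hL x)] at h
  have h2 : (2 : ℂ) * L = 0 := by linear_combination h
  have h3 : (2 : ℝ) * L = 0 := by exact_mod_cast h2
  linarith

lemma psiOne_injective (hL : 0 < L) : Function.Injective (psiOne hL) := by
  intro a b h
  induction a using OnePoint.rec with
  | infty =>
      induction b using OnePoint.rec with
      | infty => rfl
      | coe y =>
          rw [psiOne_infty, psiOne_coe] at h
          exact absurd h.symm (cay_ne_neg_one hL y)
  | coe x =>
      induction b using OnePoint.rec with
      | infty =>
          rw [psiOne_infty, psiOne_coe] at h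
          exact absurd h (cay_ne_neg_one hL x)
      | coe y =>
          rw [psiOne_coe, psiOne_coe] at h
          exact congrArg _ (cay_injective hL h)

/-- Restriction to `ℝ` as a star algebra homomorphism. -/
noncomputable def restrictHom : C(OnePoint ℝ, ℂ) →⋆ₐ[ℂ] (ℝ → ℂ) where
  toFun f := fun x : ℝ => f (x : OnePoint ℝ)
  map_one' := rfl
  map_mul' _ _ := rfl
  map_zero' := rfl
  map_add' _ _ := rfl
  commutes' _ := rfl
  map_star' _ := rfl

/-- The weight function `x ↦ (L² + x²)^(-1/2)` is in `L²`. -/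
lemma memLp_w (hL : 0 < L) :
    MemLp (fun x : ℝ => (Real.sqrt (L ^ 2 + x ^ 2))⁻¹) 2 (volume : Measure ℝ) := by
  have hpos : ∀ x : ℝ, 0 < L ^ 2 + x ^ 2 := fun x => by positivity
  have hcont : Continuous fun x : ℝ => (Real.sqrt (L ^ 2 + x ^ 2))⁻¹ := by
    apply Continuous.inv₀ (by continuity)
    intro x
    exact (Real.sqrt_pos.2 (hpos x)).ne'
  rw [memLp_two_iff_integrable_sq_norm hcont.aestronglyMeasurable]
  have hsq : (fun x : ℝ => ‖(Real.sqrt (L ^ 2 + x ^ 2))⁻¹‖ ^ 2)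
      = fun x : ℝ => (L ^ 2 + x ^ 2)⁻¹ := by
    funext x
    rw [norm_inv, Real.norm_eq_abs, _root_.abs_of_nonneg (Real.sqrt_nonneg _), inv_pow,
      Real.sq_sqrt (hpos x).le]
  rw [hsq]
  set c : ℝ := min (L ^ 2) 1 with hc
  have hcpos : 0 < c := lt_min (by positivity) one_pos
  have hint : Integrable (fun x : ℝ => c⁻¹ * (1 + x ^ 2)⁻¹) := integrable_inv_one_add_sq.const_mul _
  have hmeas : AEStronglyMeasurable (fun x : ℝ => (L ^ 2 + x ^ 2)⁻¹) volume := by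
    refine (Continuous.inv₀ (by continuity) fun x => (hpos x).ne').aestronglyMeasurable
  apply hint.mono' hmeas
  filter_upwards with x
  rw [Real.norm_eq_abs, _root_.abs_of_nonneg (by positivity)]
  have hle : c * (1 + x ^ 2) ≤ L ^ 2 + x ^ 2 := by
    have h1 : c ≤ L ^ 2 := min_le_left _ _
    have h2 : c ≤ 1 := min_le_right _ _
    nlinarith [sq_nonneg x]
  calc (L ^ 2 + x ^ 2)⁻¹ ≤ (c * (1 + x ^ 2))⁻¹ := by
        apply inv_anti₀ (by positivity) hle
    _ = c⁻¹ * (1 + x ^ 2)⁻¹ := by rw [mul_inv]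

/-- Stone-Weierstrass: the star subalgebra generated by `psiOne` is dense. -/
lemma adjoin_psiOne_dense (hL : 0 < L) :
    (StarAlgebra.adjoin ℂ ({psiOne hL} : Set C(OnePoint ℝ, ℂ))).topologicalClosure = ⊤ := by
  apply ContinuousMap.starSubalgebra_topologicalClosure_eq_top_of_separatesPoints
  intro a b hab
  refine ⟨_, ⟨psiOne hL, ?_, rfl⟩, ?_⟩
  · exact StarAlgebra.subset_adjoin ℂ _ (Set.mem_singleton _)
  · exact fun h => hab (psiOne_injective hL h)

lemma restrict_mem_cayP (hL : 0 < L) {p : C(OnePoint ℝ, ℂ)}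
    (hp : p ∈ StarAlgebra.adjoin ℂ ({psiOne hL} : Set C(OnePoint ℝ, ℂ))) :
    (fun x : ℝ => p (x : OnePoint ℝ)) ∈ cayP L := by
  have h : StarAlgebra.adjoin ℂ ({psiOne hL} : Set C(OnePoint ℝ, ℂ))
      ≤ (caySA hL).comap restrictHom := by
    apply StarAlgebra.adjoin_le
    intro f hf
    rw [Set.mem_singleton_iff] at hf
    subst hf
    show restrictHom (psiOne hL) ∈ caySA hL
    refine Submodule.subset_span ⟨1, funext fun x => ?_⟩
    simp [restrictHom, psiOne_coe]
    rfl
  exact h hp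

lemma coeFn_sum_toLp (hL : 0 < L)
    (hmem : ∀ n : ℤ, MemLp (ratBasis L n) 2 (volume : Measure ℝ))
    (s : Finset ℤ) (c : ℤ → ℂ) :
    (((∑ n ∈ s, c n • (hmem n).toLp (ratBasis L n)) : Lp ℂ 2 (volume : Measure ℝ)) : ℝ → ℂ)
      =ᵐ[volume] fun x => ∑ n ∈ s, c n • ratBasis L n x := by
  classical
  induction s using Finset.induction_on with
  | empty => simp only [Finset.sum_empty]; exact Lp.coeFn_zero ℂ 2 (volume : Measure ℝ)
  | @insert a s ha ih =>
      rw [Finset.sum_insert ha]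
      filter_upwards [Lp.coeFn_add (c a • (hmem a).toLp (ratBasis L a))
          (∑ n ∈ s, c n • (hmem n).toLp (ratBasis L n)),
        Lp.coeFn_smul (c a) ((hmem a).toLp (ratBasis L a)),
        (hmem a).coeFn_toLp, ih] with x hx1 hx2 hx3 hx4
      rw [hx1]
      simp only [Pi.add_apply, Finset.sum_insert ha]
      rw [hx2, hx4]
      simp [hx3]

end RatBasisAux

/-- The family `{φ_n : n ∈ ℤ}` is complete in `L²(ℝ, ℂ)`: the closure of its
linear span is all of `L²(ℝ, ℂ)`. -/
theorem ratBasis_complete (L : ℝ) (hL : 0 < L)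
    (hmem : ∀ n : ℤ, MemLp (ratBasis L n) 2 (volume : Measure ℝ)) :
    (Submodule.span ℂ
      (Set.range fun n : ℤ => (hmem n).toLp (ratBasis L n))).topologicalClosure = ⊤ := by
  classical
  rw [Submodule.eq_top_iff']
  intro f
  rw [← SetLike.mem_coe, Submodule.topologicalClosure_coe]
  rw [Metric.mem_closure_iff]
  intro ε hε
  -- Step 1: approximate by a continuous compactly supported function
  obtain ⟨g, gsupp, hfg, gcont, gmem⟩ :=
    (Lp.memLp f).exists_hasCompactSupport_eLpNorm_sub_le (by norm_num)
      (ε := ENNReal.ofReal (ε / 4)) (ENNReal.ofReal_pos.2 (by linarith)).ne'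
  -- weight function
  set w := fun x : ℝ => (Real.sqrt (L ^ 2 + x ^ 2))⁻¹ with hwdef
  have hw : MemLp w 2 (volume : Measure ℝ) := RatBasisAux.memLp_w hL
  set Cw := eLpNorm w 2 (volume : Measure ℝ) with hCwdef
  have hCw : Cw ≠ ⊤ := hw.2.ne
  set δ := (ε / 4) / (Cw.toReal + 1) with hδdef
  have hCwR : (0:ℝ) ≤ Cw.toReal := ENNReal.toReal_nonneg
  have hδ : 0 < δ := div_pos (by linarith) (by linarith)
  -- the function G and its extension to the one-point compactification
  set G := fun x : ℝ => g x * ((L : ℂ) - Complex.I * x) with hGdef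
  have contG : Continuous G := gcont.mul (by continuity)
  have suppG : HasCompactSupport G := gsupp.mul_right
  have tendG : Tendsto G (coclosedCompact ℝ) (𝓝 0) := by
    rw [Filter.coclosedCompact_eq_cocompact]
    apply Tendsto.congr' _ tendsto_const_nhds
    have hmem' : (tsupport G)ᶜ ∈ cocompact ℝ :=
      mem_cocompact.2 ⟨tsupport G, suppG, subset_rfl⟩
    filter_upwards [hmem'] with x hx
    exact (image_eq_zero_of_notMem_tsupport hx).symm
  set Gc : C(OnePoint ℝ, ℂ) := OnePoint.continuousMapMk ⟨G, contG⟩ 0 tendG with hGc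
  -- Stone-Weierstrass approximation
  have hGcl : Gc ∈ closure
      ((StarAlgebra.adjoin ℂ ({RatBasisAux.psiOne hL} : Set C(OnePoint ℝ, ℂ))) :
        Set C(OnePoint ℝ, ℂ)) := by
    rw [← StarSubalgebra.topologicalClosure_coe, RatBasisAux.adjoin_psiOne_dense hL]
    trivial
  rw [Metric.mem_closure_iff] at hGcl
  obtain ⟨p, hpA, hpd⟩ := hGcl δ hδ
  -- restrict p to ℝ and expand in the `cayFn` span
  have hpP := RatBasisAux.restrict_mem_cayP hL hpA
  rw [RatBasisAux.cayP] at hpP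
  obtain ⟨c, hc⟩ := Finsupp.mem_span_range_iff_exists_finsupp.mp hpP
  have hpx : ∀ x : ℝ, (∑ n ∈ c.support, c n • RatBasisAux.cayFn L x ^ n)
      = p (x : OnePoint ℝ) := by
    intro x
    have h := congrFun hc x
    rw [Finsupp.sum, Finset.sum_apply] at h
    simpa using h
  -- the candidate approximant
  set y := ∑ n ∈ c.support, c n • (hmem n).toLp (ratBasis L n) with hy
  have hyS : y ∈ Submodule.span ℂ
      (Set.range fun n : ℤ => (hmem n).toLp (ratBasis L n)) :=
    Submodule.sum_mem _ fun n _ =>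
      Submodule.smul_mem _ _ (Submodule.subset_span ⟨n, rfl⟩)
  set q := fun x : ℝ => ∑ n ∈ c.support, c n • ratBasis L n x with hqdef
  have hq : ∀ x : ℝ, q x = p (x : OnePoint ℝ) / ((L : ℂ) - Complex.I * x) := by
    intro x
    rw [hqdef, ← hpx x, Finset.sum_div]
    apply Finset.sum_congr rfl
    intro n _
    rw [RatBasisAux.ratBasis_eq hL, smul_div_assoc]
  -- pointwise bound
  have hbound : ∀ x : ℝ, ‖g x - q x‖ ≤ δ * w x := by
    intro x
    have hden := RatBasisAux.den_ne hL x
    have hgx : g x = G x / ((L : ℂ) - Complex.I * x) := by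
      rw [hGdef]
      exact (mul_div_cancel_right₀ (g x) hden).symm
    rw [hgx, hq x, div_sub_div_same, norm_div, RatBasisAux.norm_den]
    have hsq : 0 < Real.sqrt (L ^ 2 + x ^ 2) := Real.sqrt_pos.2 (by positivity)
    have hGp : ‖G x - p (x : OnePoint ℝ)‖ ≤ δ := by
      have h1 : dist (Gc (x : OnePoint ℝ)) (p (x : OnePoint ℝ)) ≤ dist Gc p :=
        ContinuousMap.dist_apply_le_dist _
      have h2 : Gc (x : OnePoint ℝ) = G x := rfl
      rw [h2, dist_eq_norm] at h1
      exact h1.trans hpd.le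
    calc ‖G x - p (x : OnePoint ℝ)‖ / Real.sqrt (L ^ 2 + x ^ 2)
        ≤ δ / Real.sqrt (L ^ 2 + x ^ 2) := by
          gcongr
      _ = δ * w x := by rw [hwdef, div_eq_mul_inv]
  -- L² bound for g - q
  have hGQ : eLpNorm (fun x => g x - q x) 2 volume ≤ ENNReal.ofReal (ε / 4) := by
    have h1 : eLpNorm (fun x => g x - q x) 2 volume
        ≤ eLpNorm (δ • w) 2 volume := by
      apply eLpNorm_mono
      intro x
      rw [Pi.smul_apply, smul_eq_mul, Real.norm_eq_abs,
        _root_.abs_of_nonneg (by positivity)]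
      exact hbound x
    rw [eLpNorm_const_smul] at h1
    have h2 : (‖δ‖₊ : ENNReal) = ENNReal.ofReal δ := Real.enorm_eq_ofReal hδ.le
    calc eLpNorm (fun x => g x - q x) 2 volume
        ≤ (‖δ‖₊ : ENNReal) * Cw := h1
      _ = ENNReal.ofReal δ * ENNReal.ofReal Cw.toReal := by
          rw [h2, ENNReal.ofReal_toReal hCw]
      _ = ENNReal.ofReal (δ * Cw.toReal) := (ENNReal.ofReal_mul hδ.le).symm
      _ ≤ ENNReal.ofReal (ε / 4) := by
          apply ENNReal.ofReal_le_ofReal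
          have : δ * (Cw.toReal + 1) = ε / 4 := by
            rw [hδdef]; field_simp
          nlinarith
  -- measurability facts
  have qmeas : AEStronglyMeasurable q (volume : Measure ℝ) :=
    Finset.aestronglyMeasurable_fun_sum _ fun n _ => ((hmem n).1.const_smul (c n))
  -- put the estimates together
  refine ⟨y, hyS, ?_⟩
  have hae := RatBasisAux.coeFn_sum_toLp hL hmem c.support (fun n => c n)
  rw [Lp.dist_def]
  have hcong : eLpNorm ((f : ℝ → ℂ) - (y : ℝ → ℂ)) 2 volume
      = eLpNorm (fun x => ((f : ℝ → ℂ) x - g x) + (g x - q x)) 2 volume := by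
    apply eLpNorm_congr_ae
    filter_upwards [hae] with x hx
    rw [Pi.sub_apply, hx]
    ring
  rw [hcong]
  have htri : eLpNorm (fun x => ((f : ℝ → ℂ) x - g x) + (g x - q x)) 2 volume
      ≤ eLpNorm ((f : ℝ → ℂ) - g) 2 volume + eLpNorm (fun x => g x - q x) 2 volume := by
    apply eLpNorm_add_le ((Lp.aestronglyMeasurable f).sub gcont.aestronglyMeasurable)
      (gcont.aestronglyMeasurable.sub qmeas) one_le_two
  have hsum : eLpNorm ((f : ℝ → ℂ) - g) 2 volume + eLpNorm (fun x => g x - q x) 2 volume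
      ≤ ENNReal.ofReal (ε / 2) := by
    calc eLpNorm ((f : ℝ → ℂ) - g) 2 volume + eLpNorm (fun x => g x - q x) 2 volume
        ≤ ENNReal.ofReal (ε / 4) + ENNReal.ofReal (ε / 4) := add_le_add hfg hGQ
      _ = ENNReal.ofReal (ε / 2) := by
          rw [← ENNReal.ofReal_add (by linarith) (by linarith)]
          congr 1
          ring
  have hfin : eLpNorm (fun x => ((f : ℝ → ℂ) x - g x) + (g x - q x)) 2 volume
      ≤ ENNReal.ofReal (ε / 2) := htri.trans hsum
  have := ENNReal.toReal_le_of_le_ofReal (by linarith) hfin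
  linarith
end

section
/- Let L > 0. For every integer n and every x ∈ ℝ, the derivative of the rational basis function satisfies φ_n′(x) = (i/(2L)) · ( n · φ_{n−1}(x) + (2n+1) · φ_n(x) + (n+1) · φ_{n+1}(x) ). -/
private lemma ratBasis_key (a b p q m : ℂ) (ha : a ≠ 0) (hb : b ≠ 0)
    (hq : q ≠ 0) (hab : a + b ≠ 0) :
    Complex.I / (a + b) *
        (m * (p / q) + (2 * m + 1) * (p * a / (q * b)) + (m + 1) * (p * a * a / (q * b * b))) =
      (Complex.I * (m * p) * (q * b) - p * a * (-Complex.I * ((m + 1) * q))) / (q * b) ^ 2 := by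
  have hden : (q * b) ^ 2 ≠ 0 := pow_ne_zero 2 (mul_ne_zero hq hb)
  rw [div_mul_eq_mul_div, div_eq_div_iff hab hden]
  field_simp
  ring

/-- `φ_n'(x) = (i/(2L)) (n φ_{n-1}(x) + (2n+1) φ_n(x) + (n+1) φ_{n+1}(x))`. -/
theorem ratBasis_deriv (L : ℝ) (hL : 0 < L) (n : ℤ) (x : ℝ) :
    HasDerivAt (fun y : ℝ => ratBasis L n y)
      ((Complex.I / (2 * (L : ℂ))) *
        ((n : ℂ) * ratBasis L (n - 1) x + (2 * (n : ℂ) + 1) * ratBasis L n x +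
          ((n : ℂ) + 1) * ratBasis L (n + 1) x)) x := by
  set a : ℂ := (L : ℂ) + Complex.I * x with ha
  set b : ℂ := (L : ℂ) - Complex.I * x with hb
  have hLne : (L : ℂ) ≠ 0 := by exact_mod_cast hL.ne'
  have hare : a.re = L := by simp [ha, Complex.add_re, Complex.mul_re]
  have hbre : b.re = L := by simp [hb, Complex.sub_re, Complex.mul_re]
  have haz : a ≠ 0 := fun h => hL.ne' (by rw [← hare, h, Complex.zero_re])
  have hbz : b ≠ 0 := fun h => hL.ne' (by rw [← hbre, h, Complex.zero_re])
  have hid : HasDerivAt (fun y : ℝ => (y : ℂ)) 1 x := by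
    simpa using (hasDerivAt_id x).ofReal_comp
  have hA : HasDerivAt (fun y : ℝ => (L : ℂ) + Complex.I * y) Complex.I x := by
    simpa using (hid.const_mul Complex.I).const_add (L : ℂ)
  have hB : HasDerivAt (fun y : ℝ => (L : ℂ) - Complex.I * y) (-Complex.I) x := by
    have h := (hid.const_mul Complex.I).const_sub (L : ℂ); rw [mul_one] at h; exact h
  have hAn : HasDerivAt (fun y : ℝ => ((L : ℂ) + Complex.I * y) ^ n)
      (Complex.I * ((n : ℂ) * a ^ (n - 1))) x := by
    simpa [Function.comp_def, smul_eq_mul] using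
      HasDerivAt.scomp x (hasDerivAt_zpow n a (Or.inl haz)) hA
  have hBn : HasDerivAt (fun y : ℝ => ((L : ℂ) - Complex.I * y) ^ (n + 1))
      (-Complex.I * (((n : ℂ) + 1) * b ^ n)) x := by
    have := HasDerivAt.scomp x (hasDerivAt_zpow (n + 1) b (Or.inl hbz)) hB
    simpa [Function.comp_def, smul_eq_mul, mul_assoc] using this
  have h := hAn.div hBn (zpow_ne_zero _ hbz)
  convert h using 1
  · rfl
  · funext y; rfl
  · have hsum : a + b = 2 * (L : ℂ) := by rw [ha, hb]; ring
    have h1 : a ^ n = a ^ (n - 1) * a := by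
      rw [← zpow_add_one₀ haz]; ring_nf
    have h2 : a ^ (n + 1) = a ^ (n - 1) * a * a := by
      rw [← zpow_add_one₀ haz, ← zpow_add_one₀ haz]; ring_nf
    have h3 : b ^ (n + 1) = b ^ n * b := zpow_add_one₀ hbz n
    have h4 : b ^ (n + 1 + 1) = b ^ n * b * b := by
      rw [zpow_add_one₀ hbz, h3]
    have h5 : b ^ (n - 1 + 1) = b ^ n := by norm_num
    simp only [ratBasis, ← ha, ← hb, h1, h2, h3, h4, h5]
    rw [hsum.symm]
    exact ratBasis_key a b (a ^ (n - 1)) (b ^ n) (n : ℂ) haz hbz (zpow_ne_zero _ hbz)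
      (by rw [hsum]; simpa using hLne)
end

section
/- Let L > 0. For every integer n and every x ∈ ℝ, the second derivative of the rational basis function satisfies φ_n″(x) = −(1/(4L²)) · ( n(n−1) · φ_{n−2}(x) + 4n² · φ_{n−1}(x) + (6n² + 6n + 2) · φ_n(x) + 4(n+1)² · φ_{n+1}(x) + (n+2)(n+1) · φ_{n+2}(x) ). -/
open Complex

lemma hasDerivAt_ratBasis (L : ℝ) (hL : 0 < L) (n : ℤ) (x : ℝ) :
    HasDerivAt (fun y : ℝ => ratBasis L n y)
      (Complex.I / (2 * L) * ((n : ℂ) * ratBasis L (n - 1) x +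
        (2 * (n : ℂ) + 1) * ratBasis L n x + ((n : ℂ) + 1) * ratBasis L (n + 1) x)) x := by
  have ha : ∀ y : ℝ, ((L : ℂ) + Complex.I * y) ≠ 0 := by
    intro y h
    have := congrArg Complex.re h
    simp [Complex.add_re, Complex.mul_re] at this
    exact hL.ne' this
  have hb : ∀ y : ℝ, ((L : ℂ) - Complex.I * y) ≠ 0 := by
    intro y h
    have := congrArg Complex.re h
    simp [Complex.sub_re, Complex.mul_re] at this
    exact hL.ne' this
  have hca : HasDerivAt (fun y : ℝ => (L : ℂ) + Complex.I * y) Complex.I x := by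
    simpa using ((Complex.ofRealCLM.hasDerivAt (x := x)).const_mul Complex.I).const_add (L : ℂ)
  have hcb : HasDerivAt (fun y : ℝ => (L : ℂ) - Complex.I * y) (-Complex.I) x := by
    simpa using ((Complex.ofRealCLM.hasDerivAt (x := x)).const_mul Complex.I).const_sub (L : ℂ)
  have hA : HasDerivAt (fun y : ℝ => ((L : ℂ) + Complex.I * y) ^ n)
      ((n : ℂ) * ((L : ℂ) + Complex.I * x) ^ (n - 1) * Complex.I) x :=
    by have := (hasDerivAt_zpow n _ (Or.inl (ha x))).comp x hca; exact this
  have hB : HasDerivAt (fun y : ℝ => ((L : ℂ) - Complex.I * y) ^ (-(n + 1)))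
      (((-(n + 1) : ℤ) : ℂ) * ((L : ℂ) - Complex.I * x) ^ (-(n + 1) - 1) * -Complex.I) x :=
    by have := (hasDerivAt_zpow (-(n + 1)) _ (Or.inl (hb x))).comp x hcb; exact this
  have heq : (fun y : ℝ => ratBasis L n y) =
      fun y : ℝ => ((L : ℂ) + Complex.I * y) ^ n * ((L : ℂ) - Complex.I * y) ^ (-(n + 1)) := by
    funext y
    rw [ratBasis, zpow_neg, div_eq_mul_inv]
  rw [heq]
  refine (hA.mul hB).congr_deriv ?_
  symm
  set a := (L : ℂ) + Complex.I * x with hadef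
  set b := (L : ℂ) - Complex.I * x with hbdef
  have ha' : a ≠ 0 := ha x
  have hb' : b ≠ 0 := hb x
  have hsum : a + b = 2 * (L : ℂ) := by rw [hadef, hbdef]; ring
  have rb : ∀ k : ℤ, ratBasis L k x = a ^ k / (b ^ k * b) := by
    intro k
    rw [ratBasis, zpow_add_one₀ hb']
  rw [rb, rb, rb, ← hsum]
  rw [zpow_sub_one₀ ha', zpow_add_one₀ ha', zpow_sub_one₀ hb', zpow_add_one₀ hb',
    zpow_sub_one₀ hb' (-(n+1)), zpow_neg, zpow_add_one₀ hb']
  have hA' : a ^ n ≠ 0 := zpow_ne_zero _ ha'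
  have hB' : b ^ n ≠ 0 := zpow_ne_zero _ hb'
  have hab : a + b ≠ 0 := by
    rw [hsum]
    exact mul_ne_zero two_ne_zero (by exact_mod_cast hL.ne')
  clear hA hB heq rb hsum hadef hbdef hca hcb ha hb
  clear_value a b
  push_cast
  field_simp
  ring

/-- Second-derivative recurrence for the rational basis functions. -/
theorem ratBasis_second_deriv (L : ℝ) (hL : 0 < L) (n : ℤ) (x : ℝ) :
    iteratedDeriv 2 (fun y : ℝ => ratBasis L n y) x =
      -(1 / (4 * (L : ℂ) ^ 2)) *
        (((n : ℂ) * ((n : ℂ) - 1)) * ratBasis L (n - 2) x +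
          (4 * (n : ℂ) ^ 2) * ratBasis L (n - 1) x +
          (6 * (n : ℂ) ^ 2 + 6 * (n : ℂ) + 2) * ratBasis L n x +
          (4 * ((n : ℂ) + 1) ^ 2) * ratBasis L (n + 1) x +
          (((n : ℂ) + 2) * ((n : ℂ) + 1)) * ratBasis L (n + 2) x) := by
  have hL' : (L : ℂ) ≠ 0 := by exact_mod_cast hL.ne'
  rw [iteratedDeriv_succ, iteratedDeriv_one]
  have hd1 : deriv (fun y : ℝ => ratBasis L n y) =
      fun y : ℝ => Complex.I / (2 * L) * ((n : ℂ) * ratBasis L (n - 1) y +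
        (2 * (n : ℂ) + 1) * ratBasis L n y + ((n : ℂ) + 1) * ratBasis L (n + 1) y) := by
    funext y
    exact (hasDerivAt_ratBasis L hL n y).deriv
  rw [hd1]
  have H : HasDerivAt (fun y : ℝ => Complex.I / (2 * L) * ((n : ℂ) * ratBasis L (n - 1) y +
      (2 * (n : ℂ) + 1) * ratBasis L n y + ((n : ℂ) + 1) * ratBasis L (n + 1) y))
      (Complex.I / (2 * L) *
        ((n : ℂ) * (Complex.I / (2 * L) * (((n : ℂ) - 1) * ratBasis L (n - 1 - 1) x +
          (2 * ((n : ℂ) - 1) + 1) * ratBasis L (n - 1) x + (((n : ℂ) - 1) + 1) * ratBasis L (n - 1 + 1) x)) +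
        (2 * (n : ℂ) + 1) * (Complex.I / (2 * L) * ((n : ℂ) * ratBasis L (n - 1) x +
          (2 * (n : ℂ) + 1) * ratBasis L n x + ((n : ℂ) + 1) * ratBasis L (n + 1) x)) +
        ((n : ℂ) + 1) * (Complex.I / (2 * L) * (((n : ℂ) + 1) * ratBasis L (n + 1 - 1) x +
          (2 * ((n : ℂ) + 1) + 1) * ratBasis L (n + 1) x + (((n : ℂ) + 1) + 1) * ratBasis L (n + 1 + 1) x)))) x := by
    have h1 := (hasDerivAt_ratBasis L hL (n - 1) x).const_mul (n : ℂ)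
    have h2 := (hasDerivAt_ratBasis L hL n x).const_mul (2 * (n : ℂ) + 1)
    have h3 := (hasDerivAt_ratBasis L hL (n + 1) x).const_mul ((n : ℂ) + 1)
    have := ((h1.add h2).add h3).const_mul (Complex.I / (2 * L))
    convert this using 2
    · rfl
    · simp only [Pi.add_apply]
    · push_cast; ring
  rw [H.deriv]
  have e1 : n - 1 - 1 = n - 2 := by ring
  have e2 : n - 1 + 1 = n := by ring
  have e3 : n + 1 - 1 = n := by ring
  have e4 : n + 1 + 1 = n + 2 := by ring
  rw [e1, e2, e3, e4]
  field_simp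
  ring_nf
  simp only [Complex.I_sq]
  ring
end

section
/- Let Q(x) = 4/(1 + x²), so that Q′(x) = −8x/(1 + x²)². For every x ∈ ℝ, the principal value H Q′(x) exists and equals 4(1 − x²)/(1 + x²)², and Q satisfies the Benjamin–Ono ground state equation: −Q(x) − H Q′(x) + Q(x)²/2 = 0 for all x ∈ ℝ. -/
open MeasureTheory Filter

/-- The principal value Hilbert transform of `f : ℝ → ℝ` at `x` exists and equals `A`. -/
def HilbertPVR (f : ℝ → ℝ) (x A : ℝ) : Prop :=
  Tendsto (fun ε : ℝ =>
      (1 / Real.pi) * ∫ y in {y : ℝ | ε < |x - y|}, f y / (x - y))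
    (nhdsWithin 0 (Set.Ioi 0)) (nhds A)

noncomputable def boPsi (x y : ℝ) : ℝ :=
  (-8*x/(1+x^2)^2) * x * Real.arctan y + (-8*x/(1+x^2)^2)/2 * Real.log (1+y^2)
    + 4/(1+x^2) * (Real.arctan y + y/(1+y^2)) + 4*x/(1+x^2) * (1/(1+y^2))

noncomputable def boG (x y : ℝ) : ℝ :=
  boPsi x y - (-8*x/(1+x^2)^2)/2 * Real.log ((x-y)^2)

lemma one_add_sq_pos (y : ℝ) : (0:ℝ) < 1 + y^2 := by positivity

set_option maxHeartbeats 1600000 in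
lemma hasDerivAt_boG (x : ℝ) {y : ℝ} (hy : y ≠ x) :
    HasDerivAt (boG x) ((-8*y/(1+y^2)^2)/(x-y)) y := by
  have h1 : (1:ℝ) + y^2 ≠ 0 := (one_add_sq_pos y).ne'
  have hxy : x - y ≠ 0 := sub_ne_zero.mpr (Ne.symm hy)
  have hq : HasDerivAt (fun z : ℝ => 1 + z^2) (2*y) y := by
    simpa using (hasDerivAt_pow 2 y).const_add 1
  have harc : HasDerivAt Real.arctan (1/(1+y^2)) y := Real.hasDerivAt_arctan y
  have hlog1 : HasDerivAt (fun z : ℝ => Real.log (1+z^2)) ((2*y)/(1+y^2)) y := hq.log h1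
  have hsub : HasDerivAt (fun z : ℝ => x - z) (-1) y := (hasDerivAt_id y).const_sub x
  have hsq : HasDerivAt (fun z : ℝ => (x - z)^2) (2*(x-y)^1 * (-1)) y := hsub.pow 2
  have hlog2 : HasDerivAt (fun z : ℝ => Real.log ((x-z)^2))
      ((2*(x-y)^1 * (-1))/((x-y)^2)) y := hsq.log (pow_ne_zero 2 hxy)
  have hdiv : HasDerivAt (fun z : ℝ => z/(1+z^2))
      ((1*(1+y^2) - y*(2*y))/((1+y^2)^2)) y := (hasDerivAt_id y).div hq h1
  have hinv : HasDerivAt (fun z : ℝ => 1/(1+z^2))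
      ((0*(1+y^2) - 1*(2*y))/((1+y^2)^2)) y := (hasDerivAt_const y 1).div hq h1
  have H := ((((harc.const_mul ((-8*x/(1+x^2)^2) * x)).add
      (hlog1.const_mul ((-8*x/(1+x^2)^2)/2))).add
      ((harc.add hdiv).const_mul (4/(1+x^2)))).add
      (hinv.const_mul (4*x/(1+x^2)))).sub
      (hlog2.const_mul ((-8*x/(1+x^2)^2)/2))
  have hx1 : (1:ℝ) + x^2 ≠ 0 := (one_add_sq_pos x).ne'
  convert (show HasDerivAt (boG x) _ y from H) using 1
  field_simp
  ring

lemma tendsto_y_div_one_add_sq_zero {l : Filter ℝ} (h : Tendsto (fun y : ℝ => |y|⁻¹) l (nhds 0))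
    (h1 : ∀ᶠ y in l, 1 ≤ |y|) :
    Tendsto (fun y : ℝ => y/(1+y^2)) l (nhds 0) := by
  apply squeeze_zero_norm' _ h
  filter_upwards [h1] with y hy
  have hp : (0:ℝ) < 1 + y^2 := one_add_sq_pos y
  have hy0 : (0:ℝ) < |y| := lt_of_lt_of_le one_pos hy
  rw [norm_div, Real.norm_eq_abs, Real.norm_eq_abs, abs_of_pos hp,
    div_le_iff₀ hp, inv_mul_eq_div, le_div_iff₀ hy0]
  nlinarith [abs_nonneg y, sq_abs y]

lemma tendsto_one_div_one_add_sq_zero {l : Filter ℝ} (h : Tendsto (fun y : ℝ => |y|⁻¹) l (nhds 0))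
    (h1 : ∀ᶠ y in l, 1 ≤ |y|) :
    Tendsto (fun y : ℝ => 1/(1+y^2)) l (nhds 0) := by
  apply squeeze_zero_norm' _ h
  filter_upwards [h1] with y hy
  have hp : (0:ℝ) < 1 + y^2 := one_add_sq_pos y
  have hy0 : (0:ℝ) < |y| := lt_of_lt_of_le one_pos hy
  rw [norm_div, Real.norm_eq_abs, Real.norm_eq_abs, abs_of_pos hp, abs_one,
    div_le_iff₀ hp, inv_mul_eq_div, le_div_iff₀ hy0]
  nlinarith [sq_abs y, abs_nonneg y, sq_nonneg (|y|-1)]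

lemma tendsto_logdiff {x : ℝ} {l : Filter ℝ}
    (h0 : Tendsto (fun y : ℝ => y⁻¹) l (nhds 0))
    (hne : ∀ᶠ y in l, y ≠ 0 ∧ y ≠ x) :
    Tendsto (fun y : ℝ => Real.log (1+y^2) - Real.log ((x-y)^2)) l (nhds 0) := by
  have hR : Tendsto (fun y : ℝ => (1+y^2)/((x-y)^2)) l (nhds 1) := by
    have h1 : Tendsto (fun y : ℝ => (y⁻¹)^2 + 1) l (nhds ((0:ℝ)^2 + 1)) :=
      ((h0.pow 2).add tendsto_const_nhds)
    have h2 : Tendsto (fun y : ℝ => (x * y⁻¹ - 1)^2) l (nhds ((x*0 - 1)^2)) :=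
      ((tendsto_const_nhds.mul h0).sub tendsto_const_nhds).pow 2
    have h3 : Tendsto (fun y : ℝ => ((y⁻¹)^2 + 1)/((x * y⁻¹ - 1)^2)) l
        (nhds (((0:ℝ)^2 + 1)/((x*0 - 1)^2))) := h1.div h2 (by norm_num)
    have : (((0:ℝ)^2 + 1)/((x*0 - 1)^2)) = 1 := by norm_num
    rw [this] at h3
    apply h3.congr'
    filter_upwards [hne] with y ⟨hy0, hyx⟩
    have hxy : x - y ≠ 0 := sub_ne_zero.mpr (fun h => hyx h.symm)
    field_simp
  have hlog : Tendsto (fun y : ℝ => Real.log ((1+y^2)/((x-y)^2))) l (nhds 0) := by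
    have := (Real.continuousAt_log (one_ne_zero)).tendsto.comp hR
    simpa [Function.comp_def] using this
  apply hlog.congr'
  filter_upwards [hne] with y ⟨hy0, hyx⟩
  have hxy : x - y ≠ 0 := sub_ne_zero.mpr (fun h => hyx h.symm)
  rw [Real.log_div (one_add_sq_pos y).ne' (pow_ne_zero 2 hxy)]

lemma abs_inv_tendsto_atTop : Tendsto (fun y : ℝ => |y|⁻¹) atTop (nhds 0) :=
  tendsto_inv_atTop_zero.comp tendsto_abs_atTop_atTop

lemma abs_inv_tendsto_atBot : Tendsto (fun y : ℝ => |y|⁻¹) atBot (nhds 0) :=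
  tendsto_inv_atTop_zero.comp tendsto_abs_atBot_atTop

lemma inv_tendsto_atBot' : Tendsto (fun y : ℝ => y⁻¹) atBot (nhds 0) := by
  have h1 : Tendsto (fun y : ℝ => (-y)⁻¹) atBot (nhds 0) :=
    tendsto_inv_atTop_zero.comp tendsto_neg_atBot_atTop
  have h2 := h1.neg
  rw [neg_zero] at h2
  exact h2.congr (fun y => by rw [inv_neg, neg_neg])

lemma tendsto_boG_atTop (x : ℝ) :
    Tendsto (boG x) atTop
      (nhds (((-8*x/(1+x^2)^2) * x + 4/(1+x^2)) * (Real.pi/2))) := by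
  have harc : Tendsto Real.arctan atTop (nhds (Real.pi/2)) :=
    tendsto_nhds_of_tendsto_nhdsWithin Real.tendsto_arctan_atTop
  have hev1 : ∀ᶠ y : ℝ in atTop, 1 ≤ |y| := by
    filter_upwards [eventually_ge_atTop (1:ℝ)] with y hy
    exact le_trans hy (le_abs_self y)
  have hevne : ∀ᶠ y : ℝ in atTop, y ≠ 0 ∧ y ≠ x := by
    filter_upwards [eventually_gt_atTop (max 0 x)] with y hy
    exact ⟨(lt_of_le_of_lt (le_max_left 0 x) hy).ne',
      (lt_of_le_of_lt (le_max_right 0 x) hy).ne'⟩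
  have hyd := tendsto_y_div_one_add_sq_zero abs_inv_tendsto_atTop hev1
  have hod := tendsto_one_div_one_add_sq_zero abs_inv_tendsto_atTop hev1
  have hld := tendsto_logdiff (x := x) tendsto_inv_atTop_zero hevne
  have H := (((harc.const_mul ((-8*x/(1+x^2)^2) * x)).add
      (hld.const_mul ((-8*x/(1+x^2)^2)/2))).add
      ((harc.add hyd).const_mul (4/(1+x^2)))).add
      (hod.const_mul (4*x/(1+x^2)))
  have heq : ((-8*x/(1+x^2)^2) * x * (Real.pi/2) + (-8*x/(1+x^2)^2)/2 * 0
      + 4/(1+x^2) * (Real.pi/2 + 0) + 4*x/(1+x^2) * 0)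
      = ((-8*x/(1+x^2)^2) * x + 4/(1+x^2)) * (Real.pi/2) := by ring
  rw [heq] at H
  apply H.congr
  intro y
  simp only [boG, boPsi]
  ring

lemma tendsto_boG_atBot (x : ℝ) :
    Tendsto (boG x) atBot
      (nhds (-(((-8*x/(1+x^2)^2) * x + 4/(1+x^2)) * (Real.pi/2)))) := by
  have harc : Tendsto Real.arctan atBot (nhds (-(Real.pi/2))) :=
    tendsto_nhds_of_tendsto_nhdsWithin Real.tendsto_arctan_atBot
  have hev1 : ∀ᶠ y : ℝ in atBot, 1 ≤ |y| := by
    filter_upwards [eventually_le_atBot (-1:ℝ)] with y hy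
    rw [abs_of_nonpos (by linarith)]; linarith
  have hevne : ∀ᶠ y : ℝ in atBot, y ≠ 0 ∧ y ≠ x := by
    filter_upwards [eventually_lt_atBot (min 0 x)] with y hy
    exact ⟨(lt_of_lt_of_le hy (min_le_left 0 x)).ne,
      (lt_of_lt_of_le hy (min_le_right 0 x)).ne⟩
  have hyd := tendsto_y_div_one_add_sq_zero abs_inv_tendsto_atBot hev1
  have hod := tendsto_one_div_one_add_sq_zero abs_inv_tendsto_atBot hev1
  have hld := tendsto_logdiff (x := x) inv_tendsto_atBot' hevne
  have H := (((harc.const_mul ((-8*x/(1+x^2)^2) * x)).add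
      (hld.const_mul ((-8*x/(1+x^2)^2)/2))).add
      ((harc.add hyd).const_mul (4/(1+x^2)))).add
      (hod.const_mul (4*x/(1+x^2)))
  have heq : ((-8*x/(1+x^2)^2) * x * (-(Real.pi/2)) + (-8*x/(1+x^2)^2)/2 * 0
      + 4/(1+x^2) * (-(Real.pi/2) + 0) + 4*x/(1+x^2) * 0)
      = -(((-8*x/(1+x^2)^2) * x + 4/(1+x^2)) * (Real.pi/2)) := by ring
  rw [heq] at H
  apply H.congr
  intro y
  simp only [boG, boPsi]
  ring

lemma boIntegrableOn (x : ℝ) {ε : ℝ} (hε : 0 < ε) :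
    IntegrableOn (fun y : ℝ => (-8*y/(1+y^2)^2)/(x-y)) {y : ℝ | ε < |x - y|} := by
  have hSopen : IsOpen {y : ℝ | ε < |x - y|} :=
    isOpen_lt continuous_const ((continuous_const.sub continuous_id).abs)
  have hSmeas : MeasurableSet {y : ℝ | ε < |x - y|} := hSopen.measurableSet
  have hint : Integrable (fun y : ℝ => (4/ε) * (1+y^2)⁻¹) :=
    integrable_inv_one_add_sq.const_mul (4/ε)
  apply Integrable.mono' hint.integrableOn
  · apply ContinuousOn.aestronglyMeasurable _ hSmeas
    apply ContinuousOn.div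
    · apply Continuous.continuousOn
      apply Continuous.div (by fun_prop) (by fun_prop)
      intro y
      positivity
    · exact continuousOn_const.sub continuousOn_id
    · intro y hy
      have : ε < |x - y| := hy
      intro h
      rw [h] at this
      simp at this
      linarith
  · rw [ae_restrict_iff' hSmeas]
    apply ae_of_all
    intro y hy
    have hxy : ε < |x - y| := hy
    have hp : (0:ℝ) < 1 + y^2 := one_add_sq_pos y
    have hxy0 : (0:ℝ) < |x - y| := lt_trans hε hxy
    rw [norm_div, Real.norm_eq_abs, Real.norm_eq_abs]
    have h8 : |(-8*y/(1+y^2)^2)| = 8*|y|/(1+y^2)^2 := by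
      rw [abs_div, abs_of_pos (by positivity : (0:ℝ) < (1+y^2)^2)]
      congr 1
      rw [show (-8*y : ℝ) = -(8*y) by ring, abs_neg, abs_mul]
      norm_num
    rw [h8, div_div, div_le_iff₀ (by positivity)]
    have hb : 8*|y| ≤ 4*(1+y^2) := by nlinarith [sq_abs y, sq_nonneg (|y|-1)]
    have : 4/ε * (1+y^2)⁻¹ * ((1+y^2)^2 * |x-y|) = 4 * (1+y^2) * (|x-y|/ε) := by
      field_simp
    rw [this]
    have h1 : (1:ℝ) ≤ |x-y|/ε := (one_le_div hε).mpr hxy.le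
    nlinarith [abs_nonneg y]

lemma integral_Iio_of_hasDerivAt_of_tendsto'' {f f' : ℝ → ℝ} {b m : ℝ}
    (hderiv : ∀ y ∈ Set.Iic b, HasDerivAt f (f' y) y)
    (hint : IntegrableOn f' (Set.Iio b))
    (hlim : Tendsto f atBot (nhds m)) :
    ∫ y in Set.Iio b, f' y = f b - m := by
  have A : MeasurableEmbedding fun y : ℝ => -y :=
    (Homeomorph.neg ℝ).isClosedEmbedding.measurableEmbedding
  have hF : ∀ y ∈ Set.Ici (-b), HasDerivAt (fun z => f (-z)) (-(f' (-y))) y := by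
    intro y hy
    have h1 : -y ∈ Set.Iic b := by simp at hy ⊢; linarith
    have := (hderiv (-y) h1).comp y (hasDerivAt_neg y)
    simpa [mul_comm, Function.comp_def] using this
  have hFint : IntegrableOn (fun y => -(f' (-y))) (Set.Ioi (-b)) := by
    apply Integrable.neg
    have h := A.integrableOn_map_iff (f := f') (s := Set.Iio b) (μ := volume)
    rw [Measure.map_neg_eq_self (volume : Measure ℝ)] at h
    rw [h] at hint
    exact (by simpa [Function.comp_def, Set.neg_preimage, Set.neg_Iio] using hint : IntegrableOn (fun y => f' (-y)) (Set.Ioi (-b)))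
  have hFlim : Tendsto (fun y => f (-y)) atTop (nhds m) :=
    hlim.comp tendsto_neg_atTop_atBot
  have key := integral_Ioi_of_hasDerivAt_of_tendsto' hF hFint hFlim
  rw [integral_neg] at key
  have heq : ∫ y in Set.Ioi (-b), f' (-y) = ∫ y in Set.Iic b, f' y := by
    rw [integral_comp_neg_Ioi]; norm_num
  rw [heq, MeasureTheory.integral_Iic_eq_integral_Iio, neg_neg] at key
  linarith

/-- `Q(x) = 4/(1+x²)` satisfies the BO ground state equation `-Q - HQ' + Q²/2 = 0`. -/
theorem BO_ground_state_equation (x : ℝ) :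
    deriv (fun y : ℝ => 4 / (1 + y ^ 2)) x = -8 * x / (1 + x ^ 2) ^ 2 ∧
    HilbertPVR (fun y : ℝ => -8 * y / (1 + y ^ 2) ^ 2) x
      (4 * (1 - x ^ 2) / (1 + x ^ 2) ^ 2) ∧
    -(4 / (1 + x ^ 2)) - 4 * (1 - x ^ 2) / (1 + x ^ 2) ^ 2
      + (4 / (1 + x ^ 2)) ^ 2 / 2 = 0 := by
  have hx1 : (0:ℝ) < 1 + x^2 := one_add_sq_pos x
  refine ⟨?_, ?_, ?_⟩
  · have hq : HasDerivAt (fun y : ℝ => 1 + y^2) (2*x) x := by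
      simpa using (hasDerivAt_pow 2 x).const_add 1
    have h := (hasDerivAt_const x (4:ℝ)).div hq hx1.ne'
    rw [show (fun y : ℝ => 4 / (1 + y ^ 2)) = ((fun _ => (4:ℝ)) / fun y => 1 + y ^ 2) from rfl, h.deriv]
    field_simp
    ring
  · unfold HilbertPVR
    set C : ℝ := (-8*x/(1+x^2)^2) * x + 4/(1+x^2) with hC
    have key : ∀ ε : ℝ, 0 < ε →
        (1 / Real.pi) * ∫ y in {y : ℝ | ε < |x - y|}, (-8*y/(1+y^2)^2)/(x - y)
          = (1/Real.pi) * (boPsi x (x-ε) - boPsi x (x+ε)) + C := by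
      intro ε hε
      have hSeq : {y : ℝ | ε < |x - y|} = Set.Iio (x-ε) ∪ Set.Ioi (x+ε) := by
        ext y
        simp only [Set.mem_setOf_eq, Set.mem_union, Set.mem_Iio, Set.mem_Ioi, lt_abs]
        constructor
        · rintro (h | h)
          · left; linarith
          · right; linarith
        · rintro (h | h)
          · left; linarith
          · right; linarith
      have hint := boIntegrableOn x hε
      have hint1 : IntegrableOn (fun y : ℝ => (-8*y/(1+y^2)^2)/(x-y)) (Set.Iio (x-ε)) := by
        apply hint.mono_set; rw [hSeq]; exact Set.subset_union_left
      have hint2 : IntegrableOn (fun y : ℝ => (-8*y/(1+y^2)^2)/(x-y)) (Set.Ioi (x+ε)) := by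
        apply hint.mono_set; rw [hSeq]; exact Set.subset_union_right
      have hdisj : Disjoint (Set.Iio (x-ε)) (Set.Ioi (x+ε)) := by
        rw [Set.disjoint_left]
        intro y h1 h2
        simp only [Set.mem_Iio] at h1
        simp only [Set.mem_Ioi] at h2
        linarith
      have hIoi : ∫ y in Set.Ioi (x+ε), (-8*y/(1+y^2)^2)/(x-y)
          = C * (Real.pi/2) - boG x (x+ε) := by
        apply integral_Ioi_of_hasDerivAt_of_tendsto' _ hint2 (tendsto_boG_atTop x)
        intro y hy
        have : y ≠ x := by simp only [Set.mem_Ici] at hy; intro h; rw [h] at hy; linarith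
        exact hasDerivAt_boG x this
      have hIio : ∫ y in Set.Iio (x-ε), (-8*y/(1+y^2)^2)/(x-y)
          = boG x (x-ε) - (-(C * (Real.pi/2))) := by
        apply integral_Iio_of_hasDerivAt_of_tendsto'' _ hint1 (tendsto_boG_atBot x)
        intro y hy
        have : y ≠ x := by simp only [Set.mem_Iic] at hy; intro h; rw [h] at hy; linarith
        exact hasDerivAt_boG x this
      rw [hSeq, setIntegral_union hdisj measurableSet_Ioi hint1 hint2, hIoi, hIio]
      have hGdiff : boG x (x-ε) - boG x (x+ε) = boPsi x (x-ε) - boPsi x (x+ε) := by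
        simp only [boG]
        have h1 : (x - (x-ε))^2 = ε^2 := by ring
        have h2 : (x - (x+ε))^2 = ε^2 := by ring
        rw [h1, h2]
        ring
      have expand : (boG x (x-ε) - -(C * (Real.pi/2))) + (C * (Real.pi/2) - boG x (x+ε))
          = (boPsi x (x-ε) - boPsi x (x+ε)) + C * Real.pi := by linarith [hGdiff]
      rw [expand, mul_add]
      congr 1
      field_simp
    have hΦ : Tendsto (fun ε : ℝ => (1/Real.pi) * (boPsi x (x-ε) - boPsi x (x+ε)) + C)
        (nhdsWithin 0 (Set.Ioi 0)) (nhds (4 * (1 - x ^ 2) / (1 + x ^ 2) ^ 2)) := by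
      have hcont : Continuous (boPsi x) := by
        unfold boPsi
        have h1 : Continuous fun y : ℝ => Real.log (1+y^2) := by
          apply Continuous.log (by fun_prop)
          intro y; exact (one_add_sq_pos y).ne'
        have h2 : Continuous fun y : ℝ => y/(1+y^2) := by
          apply Continuous.div continuous_id (by fun_prop)
          intro y; exact (one_add_sq_pos y).ne'
        have h3 : Continuous fun y : ℝ => 1/(1+y^2) := by
          apply Continuous.div continuous_const (by fun_prop)
          intro y; exact (one_add_sq_pos y).ne'
        exact (((continuous_const.mul Real.continuous_arctan).add
          (continuous_const.mul h1)).add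
          (continuous_const.mul (Real.continuous_arctan.add h2))).add
          (continuous_const.mul h3)
      have hc2 : Continuous (fun ε : ℝ => (1/Real.pi) * (boPsi x (x-ε) - boPsi x (x+ε)) + C) := by
        fun_prop
      have : Tendsto (fun ε : ℝ => (1/Real.pi) * (boPsi x (x-ε) - boPsi x (x+ε)) + C)
          (nhdsWithin 0 (Set.Ioi 0)) (nhds ((1/Real.pi) * (boPsi x (x-0) - boPsi x (x+0)) + C)) :=
        (hc2.tendsto 0).mono_left nhdsWithin_le_nhds
      simp only [sub_zero, add_zero, sub_self, mul_zero, zero_add] at this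
      convert this using 2
      rw [hC]
      field_simp
      ring
    apply hΦ.congr'
    filter_upwards [self_mem_nhdsWithin] with ε hε
    exact ((key ε hε).symm)
  · field_simp
    ring
end

section
/- For every Schwartz function f : ℝ → ℝ, the principal value H f(x) exists for every x ∈ ℝ, and the Hilbert transform is skew-adjoint on Schwartz functions: for all Schwartz f, g : ℝ → ℝ, ∫_ℝ (H f)(x) · g(x) dx = − ∫_ℝ f(x) · (H g)(x) dx. -/
open MeasureTheory Filter

namespace HilbertAux

open MeasureTheory Filter Set


lemma sub_int (f : ℝ → ℝ) (x ε : ℝ) :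
    ∫ y in {y : ℝ | ε < |x - y|}, f y / (x - y) =
    ∫ t in {t : ℝ | ε < |t|}, f (x - t) / t := by
  have h := (Measure.measurePreserving_sub_left (volume : Measure ℝ) x).setIntegral_preimage_emb
    (MeasurableEquiv.subLeft x).measurableEmbedding
    (fun y => f y / (x - y)) {y : ℝ | ε < |x - y|}
  rw [← h]
  have hs : (fun t => x - t) ⁻¹' {y : ℝ | ε < |x - y|} = {t : ℝ | ε < |t|} := by
    ext t; simp [sub_sub_cancel]
  rw [hs]
  congr 1; ext t; rw [sub_sub_cancel]

lemma odd_zero (S : Set ℝ) (hS : ∀ t : ℝ, t ∈ S ↔ -t ∈ S) :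
    ∫ t in S, 1 / t = 0 := by
  have h := (Measure.measurePreserving_neg (volume : Measure ℝ)).setIntegral_preimage_emb
    (MeasurableEquiv.neg ℝ).measurableEmbedding (fun t => 1 / t) S
  have hs : (Neg.neg : ℝ → ℝ) ⁻¹' S = S := by ext t; exact (hS t).symm
  rw [hs] at h
  have : ∫ t in S, 1 / (-t) = ∫ t in S, -(1/t) := by congr 1; ext t; rw [one_div_neg_eq_neg_one_div]
  rw [this, integral_neg] at h
  linarith

lemma schwartz_lip (f : SchwartzMap ℝ ℝ) : ∃ L : ℝ, 0 ≤ L ∧ ∀ a b : ℝ, |f a - f b| ≤ L * |a - b| := by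
  obtain ⟨C, hC0, hC⟩ := (SchwartzMap.derivCLM ℝ ℝ f).decay 0 0
  refine ⟨C, hC0.le, fun a b => ?_⟩
  have hd : ∀ y : ℝ, ‖deriv (⇑f) y‖₊ ≤ C.toNNReal := by
    intro y
    have := hC y
    simp only [pow_zero, one_mul, norm_iteratedFDeriv_zero, SchwartzMap.derivCLM_apply] at this
    rw [← NNReal.coe_le_coe]
    simpa [Real.coe_toNNReal _ hC0.le] using this
  have hl := lipschitzWith_of_nnnorm_deriv_le (f.differentiable) hd
  have := hl.dist_le_mul a b
  simpa [Real.dist_eq, Real.coe_toNNReal _ hC0.le] using this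

lemma meas_abs_gt (ε : ℝ) : MeasurableSet {t : ℝ | ε < |t|} :=
  measurableSet_lt measurable_const continuous_abs.measurable

lemma meas_abs_le (c : ℝ) : MeasurableSet {t : ℝ | |t| ≤ c} :=
  measurableSet_le continuous_abs.measurable measurable_const

lemma vol_ball_lt : (volume : Measure ℝ) {t : ℝ | |t| ≤ 1} < ⊤ := by
  have : {t : ℝ | |t| ≤ 1} = Set.Icc (-1) 1 := by ext t; simp [abs_le]
  rw [this]; simp [Real.volume_Icc]

lemma int_A1 (f : SchwartzMap ℝ ℝ) (x : ℝ) (L : ℝ) (hL : ∀ a b : ℝ, |f a - f b| ≤ L * |a - b|)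
    (S : Set ℝ) (hSm : MeasurableSet S) (hSs : S ⊆ {t : ℝ | |t| ≤ 1}) :
    IntegrableOn (fun t => (f (x - t) - f x) / t) S := by
  have hmeas : AEStronglyMeasurable (fun t : ℝ => (f (x - t) - f x) / t)
      (volume.restrict S) := by
    refine (Measurable.aestronglyMeasurable ?_)
    exact ((f.continuous.measurable.comp (measurable_const.sub measurable_id)).sub
      measurable_const).div measurable_id
  refine Integrable.mono' (g := fun _ => L) ?_ hmeas ?_
  · exact integrableOn_const (lt_of_le_of_lt (measure_mono hSs) vol_ball_lt).ne
  · filter_upwards with t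
    rcases eq_or_ne t 0 with rfl | ht
    · have h1 := hL 0 1
      have h2 := abs_nonneg ((f : ℝ → ℝ) 0 - f 1)
      simp only [div_zero, norm_zero]
      simp at h1
      linarith
    · rw [Real.norm_eq_abs, abs_div]
      rw [div_le_iff₀ (abs_pos.2 ht)]
      calc |f (x - t) - f x| ≤ L * |x - t - x| := hL _ _
        _ = L * |t| := by rw [show x - t - x = -t by ring, abs_neg]

lemma int_A2 (c : ℝ) {ε : ℝ} (hε : 0 < ε)
    (S : Set ℝ) (hSm : MeasurableSet S) (hSg : S ⊆ {t : ℝ | ε < |t|})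
    (hSs : S ⊆ {t : ℝ | |t| ≤ 1}) :
    IntegrableOn (fun t => c / t) S := by
  have hmeas : AEStronglyMeasurable (fun t : ℝ => c / t) (volume.restrict S) :=
    (measurable_const.div measurable_id).aestronglyMeasurable
  refine Integrable.mono' (g := fun _ => |c| / ε) ?_ hmeas ?_
  · exact integrableOn_const (lt_of_le_of_lt (measure_mono hSs) vol_ball_lt).ne
  · rw [ae_restrict_iff' hSm]
    filter_upwards with t htS
    have htε : ε < |t| := hSg htS
    rw [Real.norm_eq_abs, abs_div]
    exact div_le_div_of_nonneg_left (abs_nonneg c) hε htε.le |>.trans_eq rfl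

lemma int_A3 (f : SchwartzMap ℝ ℝ) (x : ℝ) :
    IntegrableOn (fun t => f (x - t) / t) {t : ℝ | 1 < |t|} := by
  have hint : Integrable (fun t : ℝ => f (x - t)) := f.integrable.comp_sub_left x
  refine Integrable.mono' (g := fun t => |f (x - t)|) (hint.abs.integrableOn) ?_ ?_
  · exact ((f.continuous.measurable.comp (measurable_const.sub measurable_id)).div
      measurable_id).aestronglyMeasurable
  · rw [ae_restrict_iff' (meas_abs_gt 1)]
    filter_upwards with t ht
    rw [Real.norm_eq_abs, abs_div]
    rcases eq_or_ne (f (x - t)) 0 with h0 | h0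
    · simp [h0]
    · have h1 : (1:ℝ) ≤ |t| := le_of_lt ht
      calc |f (x-t)| / |t| ≤ |f (x-t)| / 1 := by
            apply div_le_div_of_nonneg_left (abs_nonneg _) one_pos h1
        _ = |f (x-t)| := div_one _

lemma decomp (f : SchwartzMap ℝ ℝ) (x : ℝ) (L : ℝ)
    (hL : ∀ a b : ℝ, |f a - f b| ≤ L * |a - b|) {ε : ℝ} (hε : 0 < ε) (hε1 : ε < 1) :
    ∫ t in {t : ℝ | ε < |t|}, f (x - t) / t =
    (∫ t in {t : ℝ | ε < |t|} ∩ {t : ℝ | |t| ≤ 1}, (f (x - t) - f x) / t)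
    + ∫ t in {t : ℝ | 1 < |t|}, f (x - t) / t := by
  set S : Set ℝ := {t : ℝ | ε < |t|} ∩ {t : ℝ | |t| ≤ 1} with hS
  have hSm : MeasurableSet S := (meas_abs_gt ε).inter (meas_abs_le 1)
  have hSg : S ⊆ {t : ℝ | ε < |t|} := Set.inter_subset_left
  have hSs : S ⊆ {t : ℝ | |t| ≤ 1} := Set.inter_subset_right
  have huni : {t : ℝ | ε < |t|} = S ∪ {t : ℝ | 1 < |t|} := by
    ext t; simp only [hS, Set.mem_setOf_eq, Set.mem_union, Set.mem_inter_iff]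
    constructor
    · intro h; rcases le_or_gt |t| 1 with h1 | h1
      · exact Or.inl ⟨h, h1⟩
      · exact Or.inr h1
    · rintro (⟨h, _⟩ | h)
      · exact h
      · exact hε1.trans h
  have hdisj : Disjoint S {t : ℝ | 1 < |t|} := by
    rw [Set.disjoint_left]; rintro t ⟨_, h1⟩ h2; exact absurd (Set.mem_setOf_eq ▸ h2) (not_lt.2 h1)
  have hA1 := int_A1 f x L hL S hSm hSs
  have hA2 := int_A2 ((f : ℝ → ℝ) x) hε S hSm hSg hSs
  have hA3 := int_A3 f x
  have hfirst : IntegrableOn (fun t => f (x - t) / t) S := by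
    have : (fun t : ℝ => f (x - t) / t) = fun t => (f (x - t) - f x) / t + f x / t := by
      ext t; rcases eq_or_ne t 0 with rfl | ht
      · simp
      · field_simp; ring
    rw [this]; exact hA1.add hA2
  rw [huni, setIntegral_union hdisj (meas_abs_gt 1) hfirst hA3]
  congr 1
  have hsplit : ∫ t in S, f (x - t) / t =
      (∫ t in S, (f (x - t) - f x) / t) + ∫ t in S, f x / t := by
    rw [← integral_add hA1 hA2]
    apply setIntegral_congr_fun hSm
    intro t htS
    have ht : t ≠ 0 := by
      intro h; subst h; simpa using (hε.trans (hSg htS))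
    field_simp; ring
  rw [hsplit]
  have hzero : ∫ t in S, (f : ℝ → ℝ) x / t = 0 := by
    have : (fun t : ℝ => (f : ℝ → ℝ) x / t) = fun t => (f : ℝ → ℝ) x * (1 / t) := by
      ext t; rw [mul_one_div]
    rw [this, integral_const_mul, odd_zero S (by intro t; simp [hS, abs_neg]), mul_zero]
  rw [hzero, add_zero]

lemma ptbd (f : SchwartzMap ℝ ℝ) (x : ℝ) (L : ℝ) (hL0 : 0 ≤ L)
    (hL : ∀ a b : ℝ, |f a - f b| ≤ L * |a - b|) (t : ℝ) :
    |(f (x - t) - f x) / t| ≤ L := by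
  rcases eq_or_ne t 0 with rfl | ht
  · simpa using hL0
  · rw [abs_div, div_le_iff₀ (abs_pos.2 ht)]
    calc |f (x - t) - f x| ≤ L * |x - t - x| := hL _ _
      _ = L * |t| := by rw [show x - t - x = -t by ring, abs_neg]

lemma tendsto_T1 (f : SchwartzMap ℝ ℝ) (x : ℝ) (L : ℝ) (hL0 : 0 ≤ L)
    (hL : ∀ a b : ℝ, |f a - f b| ≤ L * |a - b|) :
    Filter.Tendsto
      (fun ε : ℝ => ∫ t in {t : ℝ | ε < |t|} ∩ {t : ℝ | |t| ≤ 1}, (f (x - t) - f x) / t)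
      (nhdsWithin 0 (Set.Ioi 0))
      (nhds (∫ t in {t : ℝ | |t| ≤ 1}, (f (x - t) - f x) / t)) := by
  set G : ℝ → ℝ := fun t => (f (x - t) - f x) / t with hG
  have hGm : Measurable G :=
    ((f.continuous.measurable.comp (measurable_const.sub measurable_id)).sub
      measurable_const).div measurable_id
  have hrw : ∀ ε : ℝ, ∫ t in {t : ℝ | ε < |t|} ∩ {t : ℝ | |t| ≤ 1}, G t
      = ∫ t in {t : ℝ | |t| ≤ 1}, ({t : ℝ | ε < |t|}).indicator G t := by
    intro ε
    rw [setIntegral_indicator (meas_abs_gt ε), Set.inter_comm]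
  simp only [hrw]
  have hae0 : ∀ᵐ t : ℝ ∂(volume.restrict {t : ℝ | |t| ≤ 1}), t ≠ 0 := by
    apply ae_restrict_of_ae
    rw [ae_iff]
    convert Real.volume_singleton (a := 0) using 2
    ext t; simp
  apply tendsto_integral_filter_of_dominated_convergence (bound := fun _ => L)
  · filter_upwards with ε
    exact (hGm.indicator (meas_abs_gt ε)).aestronglyMeasurable
  · filter_upwards with ε
    filter_upwards with t
    calc ‖({t : ℝ | ε < |t|}).indicator G t‖ ≤ ‖G t‖ := norm_indicator_le_norm_self G t
      _ ≤ L := ptbd f x L hL0 hL t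
  · exact integrableOn_const vol_ball_lt.ne
  · filter_upwards [hae0] with t ht
    have hev : ∀ᶠ ε : ℝ in nhdsWithin 0 (Set.Ioi 0), ε < |t| :=
      mem_nhdsWithin_of_mem_nhds (Iio_mem_nhds (abs_pos.2 ht))
    apply Filter.Tendsto.congr' _ tendsto_const_nhds
    filter_upwards [hev] with ε hε
    exact (Set.indicator_of_mem (show t ∈ {t : ℝ | ε < |t|} from hε) G).symm

lemma exists_pv (f : SchwartzMap ℝ ℝ) (x : ℝ) :
    ∃ A : ℝ, Filter.Tendsto (fun ε : ℝ =>
      (1 / Real.pi) * ∫ y in {y : ℝ | ε < |x - y|}, f y / (x - y))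
    (nhdsWithin 0 (Set.Ioi 0)) (nhds A) := by
  obtain ⟨L, hL0, hL⟩ := schwartz_lip f
  refine ⟨(1 / Real.pi) * ((∫ t in {t : ℝ | |t| ≤ 1}, (f (x - t) - f x) / t)
    + ∫ t in {t : ℝ | 1 < |t|}, f (x - t) / t), ?_⟩
  apply Filter.Tendsto.const_mul
  have hev : ∀ᶠ ε : ℝ in nhdsWithin 0 (Set.Ioi 0), ε ∈ Set.Ioo (0:ℝ) 1 := by
    have h1 : ∀ᶠ ε : ℝ in nhdsWithin 0 (Set.Ioi 0), ε ∈ Set.Ioi (0:ℝ) :=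
      self_mem_nhdsWithin
    have h2 : ∀ᶠ ε : ℝ in nhdsWithin 0 (Set.Ioi 0), ε < 1 :=
      mem_nhdsWithin_of_mem_nhds (Iio_mem_nhds one_pos)
    filter_upwards [h1, h2] with ε hε hε1
    exact ⟨hε, hε1⟩
  apply Filter.Tendsto.congr' (f₁ := fun ε : ℝ =>
    (∫ t in {t : ℝ | ε < |t|} ∩ {t : ℝ | |t| ≤ 1}, (f (x - t) - f x) / t)
    + ∫ t in {t : ℝ | 1 < |t|}, f (x - t) / t)
  · filter_upwards [hev] with ε hε
    rw [sub_int (⇑f) x ε]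
    exact (decomp f x L hL hε.1 hε.2).symm
  · exact (tendsto_T1 f x L hL0 hL).add tendsto_const_nhds

lemma unif_bd (f : SchwartzMap ℝ ℝ) :
    ∃ C : ℝ, 0 ≤ C ∧ ∀ x : ℝ, ∀ ε ∈ Set.Ioo (0:ℝ) 1,
      |∫ y in {y : ℝ | ε < |x - y|}, f y / (x - y)| ≤ C := by
  obtain ⟨L, hL0, hL⟩ := schwartz_lip f
  refine ⟨L * 2 + ∫ y : ℝ, |f y|, by positivity, fun x ε hε => ?_⟩
  rw [sub_int (⇑f) x ε, decomp f x L hL hε.1 hε.2]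
  set S : Set ℝ := {t : ℝ | ε < |t|} ∩ {t : ℝ | |t| ≤ 1} with hS
  have hb1 : |∫ t in S, (f (x - t) - f x) / t| ≤ L * 2 := by
    have hμS : volume S ≤ volume {t : ℝ | |t| ≤ 1} := measure_mono Set.inter_subset_right
    have h := norm_setIntegral_le_of_norm_le_const (μ := volume) (s := S) (C := L)
      (lt_of_le_of_lt hμS vol_ball_lt)
      (fun t _ => by rw [Real.norm_eq_abs]; exact ptbd f x L hL0 hL t)
    rw [Real.norm_eq_abs] at h
    refine h.trans (mul_le_mul_of_nonneg_left ?_ hL0)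
    have h2 : volume {t : ℝ | |t| ≤ 1} = 2 := by
      have : {t : ℝ | |t| ≤ 1} = Set.Icc (-1:ℝ) 1 := by ext t; simp [abs_le]
      rw [this, Real.volume_Icc]; norm_num
    have := ENNReal.toReal_mono (by rw [h2]; exact (by norm_num)) hμS
    rw [h2] at this
    simpa [Measure.real] using this
  have hb2 : |∫ t in {t : ℝ | 1 < |t|}, f (x - t) / t| ≤ ∫ y : ℝ, |f y| := by
    have h1 := norm_integral_le_integral_norm (μ := volume.restrict {t : ℝ | 1 < |t|})
      (fun t => f (x - t) / t)
    rw [Real.norm_eq_abs] at h1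
    refine h1.trans ?_
    have hint : Integrable (fun t : ℝ => |f (x - t)|) := (f.integrable.comp_sub_left x).abs
    have h2 : ∫ t in {t : ℝ | 1 < |t|}, ‖f (x - t) / t‖ ≤ ∫ t in {t : ℝ | 1 < |t|}, |f (x - t)| := by
      apply setIntegral_mono_on ((int_A3 f x).norm) (hint.integrableOn) (meas_abs_gt 1)
      intro t ht
      rw [Real.norm_eq_abs, abs_div]
      calc |f (x-t)| / |t| ≤ |f (x-t)| / 1 :=
            div_le_div_of_nonneg_left (abs_nonneg _) one_pos (le_of_lt ht)
        _ = |f (x-t)| := div_one _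
    refine h2.trans ?_
    refine (setIntegral_le_integral hint (Filter.Eventually.of_forall fun t => abs_nonneg _)).trans ?_
    rw [show (fun t : ℝ => |f (x - t)|) = fun t => (fun y => |f y|) (x - t) from rfl,
      integral_sub_left_eq_self (fun y => |(f : ℝ → ℝ) y|) volume x]
  calc |(∫ t in S, (f (x - t) - f x) / t) + ∫ t in {t : ℝ | 1 < |t|}, f (x - t) / t|
      ≤ |∫ t in S, (f (x - t) - f x) / t| + |∫ t in {t : ℝ | 1 < |t|}, f (x - t) / t| := abs_add_le _ _
    _ ≤ L * 2 + ∫ y : ℝ, |f y| := add_le_add hb1 hb2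

noncomputable def Ker (f : ℝ → ℝ) (ε : ℝ) : ℝ × ℝ → ℝ :=
  fun p => if ε < |p.1 - p.2| then f p.2 / (p.1 - p.2) else 0

lemma ker_meas (f : ℝ → ℝ) (hf : Measurable f) (ε : ℝ) : Measurable (Ker f ε) := by
  apply Measurable.ite
  · exact measurableSet_lt measurable_const
      ((measurable_fst.sub measurable_snd).abs)
  · exact (hf.comp measurable_snd).div (measurable_fst.sub measurable_snd)
  · exact measurable_const

lemma ker_eq (f : ℝ → ℝ) (ε x : ℝ) :
    ∫ y in {y : ℝ | ε < |x - y|}, f y / (x - y) = ∫ y : ℝ, Ker f ε (x, y) := by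
  rw [← integral_indicator (show MeasurableSet {y : ℝ | ε < |x - y|} from
    measurableSet_lt measurable_const (measurable_const.sub measurable_id).abs)]
  refine integral_congr_ae (Filter.Eventually.of_forall fun y => ?_)
  simp only [Set.indicator_apply, Set.mem_setOf_eq, Ker]

lemma ker_int (f g : SchwartzMap ℝ ℝ) {ε : ℝ} (hε : 0 < ε) :
    Integrable (fun p : ℝ × ℝ => Ker (⇑f) ε p * g p.1)
      ((volume : Measure ℝ).prod (volume : Measure ℝ)) := by
  have hmeas : Measurable (fun p : ℝ × ℝ => Ker (⇑f) ε p * g p.1) :=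
    (ker_meas (⇑f) f.continuous.measurable ε).mul
      (g.continuous.measurable.comp measurable_fst)
  have hbint : Integrable (fun p : ℝ × ℝ => |g p.1| * (ε⁻¹ * |f p.2|))
      ((volume : Measure ℝ).prod volume) :=
    Integrable.mul_prod g.integrable.abs (f.integrable.abs.const_mul ε⁻¹)
  refine hbint.mono' hmeas.aestronglyMeasurable ?_
  filter_upwards with p
  rw [Real.norm_eq_abs, abs_mul]
  rcases le_or_gt |p.1 - p.2| ε with h | h
  · rw [Ker, if_neg (not_lt.2 h)]
    simp only [abs_zero, zero_mul]
    positivity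
  · rw [Ker, if_pos h, abs_div]
    have hpos : (0:ℝ) < |p.1 - p.2| := lt_trans hε h
    have : |f p.2| / |p.1 - p.2| ≤ ε⁻¹ * |f p.2| := by
      rw [← div_eq_inv_mul]
      exact div_le_div_of_nonneg_left (abs_nonneg _) hε h.le
    calc |f p.2| / |p.1 - p.2| * |g p.1| ≤ ε⁻¹ * |f p.2| * |g p.1| :=
          mul_le_mul_of_nonneg_right this (abs_nonneg _)
      _ = |g p.1| * (ε⁻¹ * |f p.2|) := by ring

lemma ker_antisym (f g : ℝ → ℝ) (ε : ℝ) (x y : ℝ) :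
    Ker f ε (x, y) * g x = -(Ker g ε (y, x) * f y) := by
  simp only [Ker]
  rcases lt_or_ge ε |x - y| with h | h
  · rw [if_pos h, if_pos (by rwa [abs_sub_comm])]
    have hxy : y - x = -(x - y) := by ring
    rw [hxy, div_neg]
    ring
  · rw [if_neg (not_lt.2 h), if_neg (not_lt.2 (by rwa [abs_sub_comm]))]
    simp

lemma fubini_sym (f g : SchwartzMap ℝ ℝ) {ε : ℝ} (hε : 0 < ε) :
    ∫ x : ℝ, (∫ y : ℝ, Ker (⇑f) ε (x, y)) * g x
      = -∫ x : ℝ, f x * ∫ y : ℝ, Ker (⇑g) ε (x, y) := by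
  have h1 : ∀ x : ℝ, (∫ y : ℝ, Ker (⇑f) ε (x, y)) * g x
      = ∫ y : ℝ, Ker (⇑f) ε (x, y) * g x := fun x => (integral_mul_const _ _).symm
  simp_rw [h1]
  have hint : Integrable (Function.uncurry fun x y : ℝ => Ker (⇑f) ε (x, y) * g x)
      ((volume : Measure ℝ).prod volume) := by
    have := ker_int f g hε
    refine this.congr (Filter.Eventually.of_forall fun p => ?_)
    simp [Function.uncurry]
  rw [integral_integral_swap hint]
  have h2 : ∀ y : ℝ, ∫ x : ℝ, Ker (⇑f) ε (x, y) * g x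
      = -((∫ x : ℝ, Ker (⇑g) ε (y, x)) * f y) := by
    intro y
    have : ∀ x : ℝ, Ker (⇑f) ε (x, y) * g x = -(Ker (⇑g) ε (y, x) * f y) :=
      fun x => ker_antisym (⇑f) (⇑g) ε x y
    simp_rw [this, integral_neg, integral_mul_const]
  simp_rw [h2, integral_neg]
  congr 1
  refine integral_congr_ae (Filter.Eventually.of_forall fun y => ?_)
  ring

lemma tendsto_pair (f g : SchwartzMap ℝ ℝ) (Hf : ℝ → ℝ)
    (hHf : ∀ x : ℝ, Filter.Tendsto (fun ε : ℝ =>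
      (1 / Real.pi) * ∫ y in {y : ℝ | ε < |x - y|}, f y / (x - y))
      (nhdsWithin 0 (Set.Ioi 0)) (nhds (Hf x))) :
    Filter.Tendsto (fun ε : ℝ =>
        ∫ x : ℝ, ((1 / Real.pi) * ∫ y : ℝ, Ker (⇑f) ε (x, y)) * g x)
      (nhdsWithin 0 (Set.Ioi 0)) (nhds (∫ x : ℝ, Hf x * g x)) := by
  obtain ⟨C, hC0, hC⟩ := unif_bd f
  have hπ : (0:ℝ) < 1 / Real.pi := by positivity
  apply tendsto_integral_filter_of_dominated_convergence
    (bound := fun x => (1 / Real.pi * C) * |g x|)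
  · filter_upwards with ε
    have hsm : StronglyMeasurable (fun x : ℝ => ∫ y : ℝ, Ker (⇑f) ε (x, y)) :=
      (ker_meas (⇑f) f.continuous.measurable ε).stronglyMeasurable.integral_prod_right'
    exact ((measurable_const.mul hsm.measurable).mul
      g.continuous.measurable).aestronglyMeasurable
  · have hev : ∀ᶠ ε : ℝ in nhdsWithin 0 (Set.Ioi 0), ε ∈ Set.Ioo (0:ℝ) 1 := by
      have h1 : ∀ᶠ ε : ℝ in nhdsWithin 0 (Set.Ioi 0), ε ∈ Set.Ioi (0:ℝ) :=
        self_mem_nhdsWithin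
      have h2 : ∀ᶠ ε : ℝ in nhdsWithin 0 (Set.Ioi 0), ε < 1 :=
        mem_nhdsWithin_of_mem_nhds (Iio_mem_nhds one_pos)
      filter_upwards [h1, h2] with ε h h'; exact ⟨h, h'⟩
    filter_upwards [hev] with ε hε
    filter_upwards with x
    rw [Real.norm_eq_abs, abs_mul, abs_mul]
    have := hC x ε hε
    rw [ker_eq (⇑f) ε x] at this
    refine mul_le_mul_of_nonneg_right ?_ (abs_nonneg _)
    rw [abs_of_pos hπ]
    exact mul_le_mul_of_nonneg_left this hπ.le
  · exact (g.integrable.abs).const_mul _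
  · filter_upwards with x
    have h := hHf x
    simp_rw [ker_eq (⇑f) _ x] at h
    exact h.mul_const (g x)


end HilbertAux

open HilbertAux in
/-- For Schwartz functions the Hilbert transform exists pointwise and is skew-adjoint:
`∫ (Hf) g = -∫ f (Hg)`. -/
theorem hilbert_skew_adjoint :
    (∀ f : SchwartzMap ℝ ℝ, ∀ x : ℝ, ∃ A : ℝ, HilbertPVR (⇑f) x A) ∧
    ∀ (f g : SchwartzMap ℝ ℝ) (Hf Hg : ℝ → ℝ),
      (∀ x : ℝ, HilbertPVR (⇑f) x (Hf x)) →
      (∀ x : ℝ, HilbertPVR (⇑g) x (Hg x)) →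
      ∫ x : ℝ, Hf x * g x = -∫ x : ℝ, f x * Hg x := by
  constructor
  · exact fun f x => exists_pv f x
  · intro f g Hf Hg hHf hHg
    have e1 := tendsto_pair f g Hf hHf
    have e2 := (tendsto_pair g f Hg hHg).neg
    have heq : (fun ε : ℝ => ∫ x : ℝ, ((1 / Real.pi) * ∫ y : ℝ, Ker (⇑f) ε (x, y)) * g x)
        =ᶠ[nhdsWithin 0 (Set.Ioi 0)]
        (fun ε : ℝ => -∫ x : ℝ, ((1 / Real.pi) * ∫ y : ℝ, Ker (⇑g) ε (x, y)) * f x) := by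
      filter_upwards [self_mem_nhdsWithin] with ε (hε : (0:ℝ) < ε)
      have h1 : ∀ x : ℝ, ((1 / Real.pi) * ∫ y : ℝ, Ker (⇑f) ε (x, y)) * g x
          = (1 / Real.pi) * ((∫ y : ℝ, Ker (⇑f) ε (x, y)) * g x) := fun x => by ring
      have h2 : ∀ x : ℝ, ((1 / Real.pi) * ∫ y : ℝ, Ker (⇑g) ε (x, y)) * f x
          = (1 / Real.pi) * (f x * ∫ y : ℝ, Ker (⇑g) ε (x, y)) := fun x => by ring
      simp_rw [h1, h2, integral_const_mul, fubini_sym f g hε, mul_neg]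
    have e1' := e1.congr' heq
    have := tendsto_nhds_unique e1' e2
    rw [this]
    congr 1
    refine integral_congr_ae (Filter.Eventually.of_forall fun x => ?_)
    exact mul_comm _ _
end
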